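/- arXiv:2304.04593 — 11 statements merged into one kernel-verified Lean document; each statement's English description precedes it below -/
import Mathlib

section
/- Let 𝒜 ∈ Sp(2d,ℝ) with d×d block decomposition (A_{ij})_{i,j=1..4}, and let E_𝒜, F_𝒜, ℰ_𝒜, ℱ_𝒜 be the associated 2d×2d submatrices. Then E_𝒜ᵀF_𝒜 − F_𝒜ᵀE_𝒜 = J, ℰ_𝒜ᵀℱ_𝒜 − ℱ_𝒜ᵀℰ_𝒜 = J, and E_𝒜ᵀℱ_𝒜 − F_𝒜ᵀℰ_𝒜 = 0, where J = [[0, I_d], [−I_d, 0]]. -/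
open Matrix

def Jmat (n : Type*) [DecidableEq n] [Fintype n] : Matrix (n ⊕ n) (n ⊕ n) ℝ :=
  Matrix.fromBlocks 0 1 (-1) 0

def IsSymplectic {n : Type*} [DecidableEq n] [Fintype n]
    (S : Matrix (n ⊕ n) (n ⊕ n) ℝ) : Prop :=
  Sᵀ * Jmat n * S = Jmat n

def quad {d : ℕ} (A11 A12 A13 A14 A21 A22 A23 A24 A31 A32 A33 A34 A41 A42 A43 A44 :
    Matrix (Fin d) (Fin d) ℝ) :
    Matrix ((Fin d ⊕ Fin d) ⊕ (Fin d ⊕ Fin d)) ((Fin d ⊕ Fin d) ⊕ (Fin d ⊕ Fin d)) ℝ :=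
  Matrix.fromBlocks (Matrix.fromBlocks A11 A12 A21 A22) (Matrix.fromBlocks A13 A14 A23 A24)
    (Matrix.fromBlocks A31 A32 A41 A42) (Matrix.fromBlocks A33 A34 A43 A44)

def Lmat {d : ℕ} : Matrix (Fin d ⊕ Fin d) (Fin d ⊕ Fin d) ℝ := Matrix.fromBlocks 0 1 1 0

def Pmat {d : ℕ} : Matrix (Fin d ⊕ Fin d) (Fin d ⊕ Fin d) ℝ := Matrix.fromBlocks 0 1 0 0

def Qmat {d : ℕ} : Matrix (Fin d ⊕ Fin d) (Fin d ⊕ Fin d) ℝ := Matrix.fromBlocks 1 0 0 (-1)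

/-- the fundamental relations of the submatrices E, F, ℰ, ℱ of a
symplectic matrix 𝒜 ∈ Sp(2d,ℝ). -/
theorem stmt1 {d : ℕ}
    (A11 A12 A13 A14 A21 A22 A23 A24 A31 A32 A33 A34 A41 A42 A43 A44 :
      Matrix (Fin d) (Fin d) ℝ)
    (h : IsSymplectic
      (quad A11 A12 A13 A14 A21 A22 A23 A24 A31 A32 A33 A34 A41 A42 A43 A44)) :
    (Matrix.fromBlocks A11 A13 A21 A23)ᵀ * Matrix.fromBlocks A31 A33 A41 A43 -
        (Matrix.fromBlocks A31 A33 A41 A43)ᵀ * Matrix.fromBlocks A11 A13 A21 A23 =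
      Jmat (Fin d) ∧
    (Matrix.fromBlocks A12 A14 A22 A24)ᵀ * Matrix.fromBlocks A32 A34 A42 A44 -
        (Matrix.fromBlocks A32 A34 A42 A44)ᵀ * Matrix.fromBlocks A12 A14 A22 A24 =
      Jmat (Fin d) ∧
    (Matrix.fromBlocks A11 A13 A21 A23)ᵀ * Matrix.fromBlocks A32 A34 A42 A44 -
        (Matrix.fromBlocks A31 A33 A41 A43)ᵀ * Matrix.fromBlocks A12 A14 A22 A24 = 0 := by
  simp only [IsSymplectic, quad, Jmat, ← Matrix.fromBlocks_one, ← Matrix.fromBlocks_zero,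
    Matrix.fromBlocks_neg, Matrix.fromBlocks_transpose, Matrix.fromBlocks_multiply,
    sub_eq_add_neg, Matrix.fromBlocks_add, Matrix.fromBlocks_inj, mul_zero, mul_one, mul_neg,
    neg_zero, neg_neg, add_zero, zero_add, zero_mul, neg_mul, one_mul, neg_add_rev] at h ⊢
  obtain ⟨⟨h1,h2,h3,h4⟩,⟨h5,h6,h7,h8⟩,⟨h9,h10,h11,h12⟩,h13,h14,h15,h16⟩ := h
  refine ⟨⟨?_, ?_, ?_, ?_⟩, ⟨?_, ?_, ?_, ?_⟩, ?_, ?_, ?_, ?_⟩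
  · abel_nf at h1 ⊢; exact h1
  · abel_nf at h5 ⊢; exact h5
  · abel_nf at h9 ⊢; exact h9
  · abel_nf at h13 ⊢; exact h13
  · abel_nf at h4 ⊢; exact h4
  · abel_nf at h8 ⊢; exact h8
  · abel_nf at h12 ⊢; exact h12
  · abel_nf at h16 ⊢; exact h16
  · abel_nf at h2 ⊢; exact h2
  · abel_nf at h6 ⊢; exact h6
  · abel_nf at h10 ⊢; exact h10
  · abel_nf at h14 ⊢; exact h14
end

section
/- Let 𝒜 ∈ Sp(2d,ℝ) with submatrices E_𝒜, F_𝒜, ℰ_𝒜, ℱ_𝒜. If E_𝒜 is invertible, then ℱ_𝒜 = E_𝒜^{−T} F_𝒜ᵀ ℰ_𝒜 (where E_𝒜^{−T} denotes the inverse transpose of E_𝒜). -/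
open Matrix

/-- if E_𝒜 is invertible then ℱ_𝒜 = E_𝒜^{−T} F_𝒜ᵀ ℰ_𝒜. -/
theorem stmt2 {d : ℕ}
    (A11 A12 A13 A14 A21 A22 A23 A24 A31 A32 A33 A34 A41 A42 A43 A44 :
      Matrix (Fin d) (Fin d) ℝ)
    (h : IsSymplectic
      (quad A11 A12 A13 A14 A21 A22 A23 A24 A31 A32 A33 A34 A41 A42 A43 A44))
    (hE : IsUnit (Matrix.fromBlocks A11 A13 A21 A23).det) :
    Matrix.fromBlocks A32 A34 A42 A44 =
      ((Matrix.fromBlocks A11 A13 A21 A23)ᵀ)⁻¹ *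
        (Matrix.fromBlocks A31 A33 A41 A43)ᵀ * Matrix.fromBlocks A12 A14 A22 A24 := by
  unfold IsSymplectic quad Jmat at h
  rw [show (1 : Matrix (Fin d ⊕ Fin d) (Fin d ⊕ Fin d) ℝ) = Matrix.fromBlocks 1 0 0 1 from
      Matrix.fromBlocks_one.symm,
    show (0 : Matrix (Fin d ⊕ Fin d) (Fin d ⊕ Fin d) ℝ) = Matrix.fromBlocks 0 0 0 0 from
      Matrix.fromBlocks_zero.symm] at h
  simp only [Matrix.fromBlocks_transpose, Matrix.fromBlocks_neg, Matrix.fromBlocks_multiply,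
    Matrix.fromBlocks_add, Matrix.fromBlocks_inj, Matrix.mul_zero, Matrix.zero_mul,
    Matrix.mul_one, Matrix.one_mul, add_zero, zero_add, neg_zero, Matrix.mul_neg,
    Matrix.neg_mul] at h
  obtain ⟨⟨-, h12, -, -⟩, ⟨-, h22, -, -⟩, ⟨-, h32, -, -⟩, ⟨-, h42, -, -⟩⟩ := h
  have key : (Matrix.fromBlocks A11 A13 A21 A23)ᵀ * Matrix.fromBlocks A32 A34 A42 A44 =
      (Matrix.fromBlocks A31 A33 A41 A43)ᵀ * Matrix.fromBlocks A12 A14 A22 A24 := by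
    simp only [Matrix.fromBlocks_transpose, Matrix.fromBlocks_multiply, Matrix.fromBlocks_inj]
    refine ⟨?_, ?_, ?_, ?_⟩
    · rw [← sub_eq_zero, ← h12]; abel
    · rw [← sub_eq_zero, ← h22]; abel
    · rw [← sub_eq_zero, ← h32]; abel
    · rw [← sub_eq_zero, ← h42]; abel
  rw [Matrix.mul_assoc, ← key, ← Matrix.mul_assoc,
    Matrix.nonsing_inv_mul _ (by simpa using hE), Matrix.one_mul]
end

section
/- Let 𝒜 ∈ Sp(2d,ℝ) with submatrices E_𝒜, ℰ_𝒜, and let L = [[0, I_d], [I_d, 0]]. If E_𝒜 is invertible, then the 2d×2d matrix G_𝒜 := L E_𝒜^{−1} ℰ_𝒜 belongs to Sp(d,ℝ), i.e. G_𝒜ᵀ J G_𝒜 = J. -/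
open Matrix

lemma flipSymp {n : Type*} [DecidableEq n] [Fintype n] (S : Matrix (n ⊕ n) (n ⊕ n) ℝ)
    (h : Sᵀ * Jmat n * S = Jmat n) : S * Jmat n * Sᵀ = Jmat n := by
  have hJ : Jmat n = -(Matrix.J n ℝ) := by simp [Jmat, Matrix.J, Matrix.fromBlocks_neg]
  rw [hJ] at h ⊢
  have hm : S ∈ Matrix.symplecticGroup n ℝ := by
    rw [SymplecticGroup.mem_iff']
    simpa [mul_neg, neg_mul, neg_inj] using h
  have := SymplecticGroup.mem_iff.mp hm
  simp [mul_neg, neg_mul, this]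

lemma Jmat_sq {n : Type*} [DecidableEq n] [Fintype n] :
    Jmat n * Jmat n = -1 := by
  simp [Jmat, Matrix.fromBlocks_multiply, ← Matrix.fromBlocks_one, Matrix.fromBlocks_neg]

lemma LJL {d : ℕ} : (Lmat (d := d)) * Jmat (Fin d) * Lmat = -(Jmat (Fin d)) := by
  simp [Lmat, Jmat, Matrix.fromBlocks_multiply, Matrix.fromBlocks_neg]

/-- if E_𝒜 is invertible then G_𝒜 = L E_𝒜⁻¹ ℰ_𝒜 is symplectic. -/
theorem stmt3 {d : ℕ}
    (A11 A12 A13 A14 A21 A22 A23 A24 A31 A32 A33 A34 A41 A42 A43 A44 :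
      Matrix (Fin d) (Fin d) ℝ)
    (h : IsSymplectic
      (quad A11 A12 A13 A14 A21 A22 A23 A24 A31 A32 A33 A34 A41 A42 A43 A44))
    (hE : IsUnit (Matrix.fromBlocks A11 A13 A21 A23).det) :
    IsSymplectic
      (Lmat * (Matrix.fromBlocks A11 A13 A21 A23)⁻¹ * Matrix.fromBlocks A12 A14 A22 A24) := by
  set E := Matrix.fromBlocks A11 A13 A21 A23 with hEdef
  set F := Matrix.fromBlocks A12 A14 A22 A24 with hFdef
  set Jd := Jmat (Fin d) with hJd
  -- flip the symplectic condition
  have h' := flipSymp _ h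
  -- extract the key block identity E J Eᵀ + F J Fᵀ = 0
  have key : E * Jd * Eᵀ + F * Jd * Fᵀ = 0 := by
    have hTL := congrArg Matrix.toBlocks₁₁ h'
    simp only [quad, Jmat, Matrix.fromBlocks_multiply, Matrix.fromBlocks_transpose,
      Matrix.toBlocks_fromBlocks₁₁, Matrix.mul_zero, Matrix.zero_mul, Matrix.mul_one,
      mul_zero, zero_mul, mul_one, mul_neg, neg_mul, add_zero, zero_add] at hTL
    rw [← hTL]
    simp only [hEdef, hFdef, hJd, Jmat, Matrix.fromBlocks_multiply,
      Matrix.fromBlocks_transpose, Matrix.fromBlocks_add, Matrix.fromBlocks_neg,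
      Matrix.mul_zero, Matrix.zero_mul, Matrix.mul_one, mul_zero, zero_mul, mul_one,
      mul_neg, neg_mul, add_zero, zero_add]
    congr 1 <;> abel
  -- invertibility facts
  have hET : IsUnit Eᵀ.det := by rwa [Matrix.det_transpose]
  have hinv : E⁻¹ * E = 1 := Matrix.nonsing_inv_mul E hE
  have hinvT : Eᵀ * (E⁻¹)ᵀ = 1 := by
    rw [Matrix.transpose_nonsing_inv, Matrix.mul_nonsing_inv Eᵀ hET]
  set K := E⁻¹ * F with hK
  -- K J Kᵀ = -J
  have h1 : K * Jd * Kᵀ = -Jd := by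
    have : F * Jd * Fᵀ = -(E * Jd * Eᵀ) := by
      rw [eq_neg_iff_add_eq_zero, add_comm]; exact key
    calc K * Jd * Kᵀ = E⁻¹ * (F * Jd * Fᵀ) * (E⁻¹)ᵀ := by
          rw [hK]; simp only [Matrix.transpose_mul, Matrix.mul_assoc]
      _ = E⁻¹ * (-(E * Jd * Eᵀ)) * (E⁻¹)ᵀ := by rw [this]
      _ = -(E⁻¹ * E * Jd * (Eᵀ * (E⁻¹)ᵀ)) := by
          simp only [Matrix.mul_neg, Matrix.neg_mul, Matrix.mul_assoc]
      _ = -Jd := by rw [hinv, hinvT]; simp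
  -- Kᵀ J K = -J
  have h2 : K * (Jd * Kᵀ * Jd) = 1 := by
    have : K * Jd * Kᵀ * Jd = -Jd * Jd := by rw [h1]
    rw [neg_mul, Jmat_sq, neg_neg] at this
    rw [← this]; simp only [Matrix.mul_assoc]
  have h3 : Jd * Kᵀ * Jd * K = 1 := mul_eq_one_comm.mp h2
  have h4 : Kᵀ * Jd * K = -Jd := by
    have h5 : Jd * (Kᵀ * Jd * K) = 1 := by rw [← h3]; simp only [Matrix.mul_assoc]
    have := congrArg (fun M => (-Jd) * M) h5
    simp only [Matrix.mul_neg, Matrix.neg_mul] at this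
    rw [← Matrix.mul_assoc, Jmat_sq] at this
    have h6 : -Jd = Kᵀ * Jd * K := by simpa using this.symm
    exact h6.symm
  -- conclude
  show (Lmat * E⁻¹ * F)ᵀ * Jd * (Lmat * E⁻¹ * F) = Jd
  have hLT : (Lmat (d := d))ᵀ = Lmat := by simp [Lmat, Matrix.fromBlocks_transpose]
  calc (Lmat * E⁻¹ * F)ᵀ * Jd * (Lmat * E⁻¹ * F)
      = Kᵀ * (Lmat * Jd * Lmat) * K := by
        simp only [Matrix.transpose_mul, hLT, hK, Matrix.mul_assoc]
    _ = Kᵀ * (-Jd) * K := by rw [LJL]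
    _ = -(Kᵀ * Jd * K) := by simp [Matrix.mul_assoc]
    _ = Jd := by rw [h4, neg_neg]
end

section
/- Let 𝒜 ∈ Sp(2d,ℝ) with submatrices E_𝒜, ℰ_𝒜. If E_𝒜 is invertible, then ℰ_𝒜 is invertible and det(ℰ_𝒜) = (−1)^d det(E_𝒜). -/
open Matrix

variable {l : Type*} [DecidableEq l] [Fintype l]

private lemma ct_eq_t {m k : Type*} [Fintype m] (M : Matrix m k ℝ) : Mᴴ = Mᵀ := by
  ext i j; simp [Matrix.conjTranspose_apply]

open scoped MatrixOrder in
theorem symplectic_det_eq_one {S : Matrix (l ⊕ l) (l ⊕ l) ℝ}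
    (hS : S ∈ Matrix.symplecticGroup l ℝ) : S.det = 1 := by
  set J := Matrix.J l ℝ with hJdef
  have hJunit := Matrix.isUnit_det_J l ℝ
  have hmem := SymplecticGroup.mem_iff'.mp hS
  -- det S * det S = 1
  have hsq : S.det * S.det = 1 := by
    have h1 := congrArg Matrix.det hmem
    rw [Matrix.det_mul, Matrix.det_mul, Matrix.det_transpose] at h1
    have h2 : S.det * S.det * J.det = 1 * J.det := by
      rw [one_mul]; linear_combination h1
    exact mul_right_cancel₀ hJunit.ne_zero h2
  -- K = Sᵀ S is symmetric positive semidefinite and symplectic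
  set K := Sᵀ * S with hKdef
  have hKsd : K.PosSemidef := by
    have := Matrix.posSemidef_conjTranspose_mul_self S
    rwa [ct_eq_t] at this
  have hKsymm : Kᵀ = K := by rw [hKdef, Matrix.transpose_mul, Matrix.transpose_transpose]
  have hKmem : K ∈ Matrix.symplecticGroup l ℝ :=
    mul_mem (SymplecticGroup.transpose_mem hS) hS
  have hKdet : K.det = 1 := by
    rw [hKdef, Matrix.det_mul, Matrix.det_transpose, hsq]
  have hKJK : K * J * K = J := by
    have := SymplecticGroup.mem_iff.mp hKmem
    rwa [hKsymm] at this
  have hJJt : J * Jᵀ = 1 := by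
    rw [hJdef, Matrix.J_transpose, Matrix.mul_neg, Matrix.J_squared, neg_neg]
  have hJtJ : Jᵀ * J = 1 := by
    rw [hJdef, Matrix.J_transpose, Matrix.neg_mul, Matrix.J_squared, neg_neg]
  have hKinv : K⁻¹ = Jᵀ * K * J := by
    refine Matrix.inv_eq_left_inv ?_
    calc Jᵀ * K * J * K = Jᵀ * (K * J * K) := by
          simp only [Matrix.mul_assoc]
    _ = Jᵀ * J := by rw [hKJK]
    _ = 1 := hJtJ
  -- the positive semidefinite square root of K
  set P := CFC.sqrt K with hPdef
  have hPsd : P.PosSemidef := Matrix.nonneg_iff_posSemidef.mp (CFC.sqrt_nonneg K)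
  have hPP : P * P = K := CFC.sqrt_mul_sqrt_self K hKsd.nonneg
  have hPt : Pᵀ = P := by
    rw [← ct_eq_t P]; exact hPsd.isHermitian
  -- C = Jᵀ P J equals P⁻¹
  have hCsd : (Jᵀ * P * J).PosSemidef := by
    have := hPsd.conjTranspose_mul_mul_same J
    rwa [ct_eq_t] at this
  have hPinvsd : (P⁻¹).PosSemidef := hPsd.inv
  have hCP : Jᵀ * P * J = P⁻¹ := by
    refine (fun hsq : (Jᵀ * P * J) ^ 2 = (P⁻¹) ^ 2 =>
      (CFC.sqrt_unique (pow_two (Jᵀ * P * J)).symm hCsd.nonneg).symm.trans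
        (hsq ▸ CFC.sqrt_unique (pow_two P⁻¹).symm hPinvsd.nonneg)) ?_
    have h1 : (Jᵀ * P * J) ^ 2 = K⁻¹ := by
      calc (Jᵀ * P * J) ^ 2 = Jᵀ * P * (J * Jᵀ) * P * J := by
            rw [pow_two]; simp only [Matrix.mul_assoc]
      _ = Jᵀ * (P * P) * J := by rw [hJJt]; simp only [Matrix.mul_one, Matrix.mul_assoc]
      _ = K⁻¹ := by rw [hPP, hKinv]
    have h2 : (P⁻¹) ^ 2 = K⁻¹ := by
      rw [pow_two, ← Matrix.mul_inv_rev, hPP]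
    rw [h1, h2]
  -- det P = 1
  have hPdet1 : P.det * P.det = 1 := by
    have : (P * P).det = K.det := by rw [hPP]
    rwa [Matrix.det_mul, hKdet] at this
  have hPdetnn : 0 ≤ P.det := by
    exact hPsd.det_nonneg
  have hPdet : P.det = 1 := by
    rcases mul_self_eq_one_iff.mp hPdet1 with h | h
    · exact h
    · exfalso; rw [h] at hPdetnn; linarith
  have hPunit : IsUnit P.det := by rw [hPdet]; exact isUnit_one
  have hPinvP : P⁻¹ * P = 1 := Matrix.nonsing_inv_mul P hPunit
  have hPPinv : P * P⁻¹ = 1 := Matrix.mul_nonsing_inv P hPunit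
  -- P is symplectic : P * J * P = J
  have hPJP : P * J * P = J := by
    have h1 : P * (Jᵀ * P * J) = 1 := by rw [hCP, hPPinv]
    have h2 : P * Jᵀ * P * (J * Jᵀ) = Jᵀ := by
      calc P * Jᵀ * P * (J * Jᵀ) = (P * (Jᵀ * P * J)) * Jᵀ := by simp only [Matrix.mul_assoc]
      _ = Jᵀ := by rw [h1, Matrix.one_mul]
    rw [hJJt, Matrix.mul_one] at h2
    have h3 : P * (-J) * P = -J := by rwa [Matrix.J_transpose] at h2
    have := congrArg Neg.neg h3
    simpa [Matrix.mul_neg, Matrix.neg_mul] using this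
  -- the orthogonal part Q = S * P⁻¹
  set Q := S * P⁻¹ with hQdef
  have hQtr : Qᵀ = P⁻¹ * Sᵀ := by
    rw [hQdef, Matrix.transpose_mul, Matrix.transpose_nonsing_inv, hPt]
  have hJPinv : P⁻¹ * J * P⁻¹ = J := by
    have h0 : P⁻¹ * (P * J * P) * P⁻¹ = P⁻¹ * J * P⁻¹ := by rw [hPJP]
    calc P⁻¹ * J * P⁻¹ = (P⁻¹ * P) * J * (P * P⁻¹) := by
          rw [← h0]; simp only [Matrix.mul_assoc]
    _ = J := by rw [hPinvP, hPPinv, Matrix.one_mul, Matrix.mul_one]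
  have hQJQ : Qᵀ * J * Q = J := by
    calc Qᵀ * J * Q = P⁻¹ * (Sᵀ * J * S) * P⁻¹ := by
          rw [hQtr, hQdef]; simp only [Matrix.mul_assoc]
    _ = P⁻¹ * J * P⁻¹ := by rw [hmem]
    _ = J := hJPinv
  have hQorth : Qᵀ * Q = 1 := by
    calc Qᵀ * Q = P⁻¹ * (Sᵀ * S) * P⁻¹ := by rw [hQtr, hQdef]; simp only [Matrix.mul_assoc]
    _ = P⁻¹ * (P * P) * P⁻¹ := by rw [← hKdef, ← hPP]
    _ = (P⁻¹ * P) * (P * P⁻¹) := by simp only [Matrix.mul_assoc]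
    _ = 1 := by rw [hPinvP, hPPinv, Matrix.one_mul]
  have hQQt : Q * Qᵀ = 1 := mul_eq_one_comm.mp hQorth
  have hcomm : J * Q = Q * J := by
    calc J * Q = (Q * Qᵀ) * J * Q := by rw [hQQt, Matrix.one_mul]
    _ = Q * (Qᵀ * J * Q) := by simp only [Matrix.mul_assoc]
    _ = Q * J := by rw [hQJQ]
  -- block structure of Q
  have hQb : Q = Matrix.fromBlocks Q.toBlocks₁₁ Q.toBlocks₁₂ Q.toBlocks₂₁ Q.toBlocks₂₂ :=
    (Matrix.fromBlocks_toBlocks Q).symm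
  set X := Q.toBlocks₁₁ with hXdef
  set Y := Q.toBlocks₁₂ with hYdef
  set Z := Q.toBlocks₂₁ with hZdef
  set W := Q.toBlocks₂₂ with hWdef
  have hJQ : J * Q = Matrix.fromBlocks (-Z) (-W) X Y := by
    rw [hJdef, Matrix.J, hQb, Matrix.fromBlocks_multiply]
    simp
  have hQJ : Q * J = Matrix.fromBlocks Y (-X) W (-Z) := by
    rw [hJdef, Matrix.J, hQb, Matrix.fromBlocks_multiply]
    simp
  have hEq : Matrix.fromBlocks (-Z) (-W) X Y = Matrix.fromBlocks Y (-X) W (-Z) := by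
    rw [← hJQ, ← hQJ, hcomm]
  have hXW : X = W := by
    have := congrArg Matrix.toBlocks₂₁ hEq
    simpa [Matrix.toBlocks_fromBlocks₂₁] using this
  have hZY : Z = -Y := by
    have := congrArg Matrix.toBlocks₁₁ hEq
    simp only [Matrix.toBlocks_fromBlocks₁₁] at this
    rw [← this, neg_neg]
  have hQXY : Q = Matrix.fromBlocks X Y (-Y) X := by
    rw [hQb, ← hXW, hZY]
  -- complexify
  have hdetQnn : 0 ≤ Q.det := by
    set f : ℝ →+* ℂ := algebraMap ℝ ℂ with hfdef
    have hdetc : (f Q.det) = ((Q.map f).det) := RingHom.map_det f Q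
    set Xc := X.map f with hXcdef
    set Yc := Y.map f with hYcdef
    have hQc : Q.map f = Matrix.fromBlocks Xc Yc (-Yc) Xc := by
      rw [hQXY]
      ext (i | i) (j | j) <;> simp [Matrix.fromBlocks, hXcdef, hYcdef, Matrix.map_apply]
    set L : Matrix (l ⊕ l) (l ⊕ l) ℂ := Matrix.fromBlocks 1 0 (Complex.I • 1) 1 with hLdef
    set R : Matrix (l ⊕ l) (l ⊕ l) ℂ := Matrix.fromBlocks 1 0 (-Complex.I • 1) 1 with hRdef
    have hLQR : L * (Q.map f) * R =
        Matrix.fromBlocks (Xc - Complex.I • Yc) Yc 0 (Xc + Complex.I • Yc) := by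
      rw [hQc, hLdef, hRdef, Matrix.fromBlocks_multiply, Matrix.fromBlocks_multiply]
      simp [Matrix.smul_mul, Matrix.mul_smul, smul_smul, Complex.I_mul_I, sub_eq_add_neg]
      exact ⟨by abel, by abel⟩
    have hdetL : L.det = 1 := by
      rw [hLdef, Matrix.det_fromBlocks_zero₁₂]; simp
    have hdetR : R.det = 1 := by
      rw [hRdef, Matrix.det_fromBlocks_zero₁₂]; simp
    set z := (Xc + Complex.I • Yc).det with hzdef
    have hconj : (Xc - Complex.I • Yc) = (Xc + Complex.I • Yc).map (starRingEnd ℂ) := by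
      ext i j
      simp [hXcdef, hYcdef, hfdef, Matrix.map_apply, Matrix.smul_apply, Matrix.sub_apply,
        Matrix.add_apply, Complex.conj_ofReal]
      ring
    have hdetQc : (Q.map f).det = (starRingEnd ℂ) z * z := by
      have h1 : (L * (Q.map f) * R).det = (Q.map f).det := by
        rw [Matrix.det_mul, Matrix.det_mul, hdetL, hdetR, one_mul, mul_one]
      have hcd : ((Xc + Complex.I • Yc).map (starRingEnd ℂ)).det = (starRingEnd ℂ) z := by
        rw [hzdef, RingHom.map_det, RingHom.mapMatrix_apply]
      rw [← h1, hLQR, Matrix.det_fromBlocks_zero₂₁, hconj, hcd, hzdef]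
    have : (f Q.det) = ((Complex.normSq z : ℝ) : ℂ) := by
      rw [hdetc, hdetQc, mul_comm, Complex.mul_conj]
    have hre : Q.det = Complex.normSq z := by
      rw [hfdef] at this
      simp only [Complex.coe_algebraMap] at this
      exact_mod_cast this
    rw [hre]
    exact Complex.normSq_nonneg z
  -- conclude
  have hQPS : Q * P = S := by
    rw [hQdef, Matrix.mul_assoc, hPinvP, Matrix.mul_one]
  have hdetS : S.det = Q.det := by
    rw [← hQPS, Matrix.det_mul, hPdet, mul_one]
  have hSnn : 0 ≤ S.det := hdetS ▸ hdetQnn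
  rcases mul_self_eq_one_iff.mp hsq with h | h
  · exact h
  · exfalso; rw [h] at hSnn; linarith

private lemma jmat_eq_negJ (l : Type*) [DecidableEq l] [Fintype l] :
    (Matrix.fromBlocks 0 1 (-1) 0 : Matrix (l ⊕ l) (l ⊕ l) ℝ) = -(Matrix.J l ℝ) := by
  ext (i | i) (j | j) <;> simp [Matrix.J, Matrix.fromBlocks]

private lemma det_eq_one_of_symp {l : Type*} [DecidableEq l] [Fintype l]
    {S : Matrix (l ⊕ l) (l ⊕ l) ℝ}
    (h : Sᵀ * (Matrix.fromBlocks 0 1 (-1) 0 : Matrix (l ⊕ l) (l ⊕ l) ℝ) * S =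
      Matrix.fromBlocks 0 1 (-1) 0) : S.det = 1 := by
  apply symplectic_det_eq_one (l := l)
  rw [SymplecticGroup.mem_iff']
  rw [jmat_eq_negJ] at h
  have h2 := congrArg Neg.neg h
  simpa [Matrix.mul_neg, Matrix.neg_mul] using h2

private lemma core {d : ℕ} (E F G H : Matrix (Fin d ⊕ Fin d) (Fin d ⊕ Fin d) ℝ)
    (r1 : Eᵀ * G - Gᵀ * E = Matrix.fromBlocks 0 1 (-1) 0)
    (r2 : Eᵀ * H - Gᵀ * F = 0)
    (r4 : Fᵀ * H - Hᵀ * F = Matrix.fromBlocks 0 1 (-1) 0)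
    (hE : IsUnit E.det) :
    IsUnit F.det ∧ F.det = (-1 : ℝ) ^ d * E.det := by
  set jd : Matrix (Fin d ⊕ Fin d) (Fin d ⊕ Fin d) ℝ := Matrix.fromBlocks 0 1 (-1) 0 with hjd
  have hEt : IsUnit Eᵀ.det := by rwa [Matrix.det_transpose]
  have hEiE : E⁻¹ * E = 1 := Matrix.nonsing_inv_mul E hE
  have hEEi : E * E⁻¹ = 1 := Matrix.mul_nonsing_inv E hE
  have hEtiEt : Eᵀ⁻¹ * Eᵀ = 1 := Matrix.nonsing_inv_mul Eᵀ hEt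
  set Y := E⁻¹ * F with hYdef
  have hYt : Yᵀ = Fᵀ * Eᵀ⁻¹ := by
    rw [hYdef, Matrix.transpose_mul, Matrix.transpose_nonsing_inv]
  have r2' : Eᵀ * H = Gᵀ * F := sub_eq_zero.mp r2
  have r2t : Hᵀ * E = Fᵀ * G := by
    have := congrArg Matrix.transpose r2'
    simpa [Matrix.transpose_mul] using this
  -- key computation
  have hmid : Eᵀ⁻¹ * (Eᵀ * G - Gᵀ * E) * E⁻¹ = G * E⁻¹ - Eᵀ⁻¹ * Gᵀ := by
    rw [Matrix.mul_sub, Matrix.sub_mul]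
    congr 1
    · calc Eᵀ⁻¹ * (Eᵀ * G) * E⁻¹ = (Eᵀ⁻¹ * Eᵀ) * (G * E⁻¹) := by
            simp only [Matrix.mul_assoc]
      _ = G * E⁻¹ := by rw [hEtiEt, Matrix.one_mul]
    · calc Eᵀ⁻¹ * (Gᵀ * E) * E⁻¹ = Eᵀ⁻¹ * Gᵀ * (E * E⁻¹) := by
            simp only [Matrix.mul_assoc]
      _ = Eᵀ⁻¹ * Gᵀ := by rw [hEEi, Matrix.mul_one]
  have hY : Yᵀ * jd * Y = -jd := by
    calc Yᵀ * jd * Y = Fᵀ * (Eᵀ⁻¹ * jd * E⁻¹) * F := by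
          rw [hYt, hYdef]; simp only [Matrix.mul_assoc]
    _ = Fᵀ * (G * E⁻¹ - Eᵀ⁻¹ * Gᵀ) * F := by rw [← r1, hmid]
    _ = Fᵀ * G * E⁻¹ * F - Fᵀ * (Eᵀ⁻¹ * Gᵀ) * F := by
          rw [Matrix.mul_sub, Matrix.sub_mul]; simp only [Matrix.mul_assoc]
    _ = Hᵀ * E * E⁻¹ * F - Fᵀ * Eᵀ⁻¹ * (Eᵀ * H) := by
          rw [r2t, r2']; simp only [Matrix.mul_assoc]
    _ = Hᵀ * F - Fᵀ * H := by
          rw [Matrix.mul_assoc Hᵀ E E⁻¹, hEEi, Matrix.mul_one,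
            ← Matrix.mul_assoc (Fᵀ * Eᵀ⁻¹) Eᵀ H, Matrix.mul_assoc Fᵀ Eᵀ⁻¹ Eᵀ, hEtiEt,
            Matrix.mul_one]
    _ = -(Fᵀ * H - Hᵀ * F) := by rw [neg_sub]
    _ = -jd := by rw [r4]
  -- Z = Qmat * Y is symplectic
  set Qm : Matrix (Fin d ⊕ Fin d) (Fin d ⊕ Fin d) ℝ := Matrix.fromBlocks 1 0 0 (-1) with hQm
  have hQjQ : Qmᵀ * jd * Qm = -jd := by
    rw [hQm, hjd, Matrix.fromBlocks_transpose, Matrix.fromBlocks_multiply,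
      Matrix.fromBlocks_multiply]
    ext (i | i) (j | j) <;> simp [Matrix.fromBlocks]
  have hZ : (Qm * Y)ᵀ * jd * (Qm * Y) = jd := by
    calc (Qm * Y)ᵀ * jd * (Qm * Y) = Yᵀ * (Qmᵀ * jd * Qm) * Y := by
          rw [Matrix.transpose_mul]; simp only [Matrix.mul_assoc]
    _ = Yᵀ * (-jd) * Y := by rw [hQjQ]
    _ = -(Yᵀ * jd * Y) := by simp [Matrix.mul_neg, Matrix.neg_mul]
    _ = jd := by rw [hY, neg_neg]
  have hdetZ : (Qm * Y).det = 1 := det_eq_one_of_symp (by rw [← hjd]; exact hZ)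
  have hdetQm : Qm.det = (-1 : ℝ) ^ d := by
    rw [hQm, Matrix.det_fromBlocks_zero₂₁, Matrix.det_one, one_mul]
    rw [show (-1 : Matrix (Fin d) (Fin d) ℝ) = -(1 : Matrix (Fin d) (Fin d) ℝ) from rfl]
    rw [Matrix.det_neg, Matrix.det_one, mul_one, Fintype.card_fin]
  have hdetY : Y.det = (-1 : ℝ) ^ d := by
    have h1 : Qm.det * Y.det = 1 := by rw [← Matrix.det_mul, hdetZ]
    rw [hdetQm] at h1
    have h2 : ((-1 : ℝ) ^ d) * ((-1 : ℝ) ^ d * Y.det) = ((-1 : ℝ) ^ d) * 1 := by rw [h1]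
    rwa [← mul_assoc, ← pow_add, Even.neg_one_pow ⟨d, (two_mul d).symm ▸ rfl⟩, one_mul,
      mul_one] at h2
  have hEY : E * Y = F := by
    rw [hYdef, ← Matrix.mul_assoc, hEEi, Matrix.one_mul]
  have hdetF : F.det = (-1 : ℝ) ^ d * E.det := by
    rw [← hEY, Matrix.det_mul, hdetY, mul_comm]
  refine ⟨?_, hdetF⟩
  rw [hdetF]
  exact (isUnit_iff_ne_zero.mpr (by positivity : ((-1 : ℝ) ^ d) ≠ 0) |>.mul hE)

/-- if E_𝒜 is invertible then ℰ_𝒜 is invertible and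
det(ℰ_𝒜) = (−1)^d det(E_𝒜). -/

theorem stmt4 {d : ℕ}
    (A11 A12 A13 A14 A21 A22 A23 A24 A31 A32 A33 A34 A41 A42 A43 A44 :
      Matrix (Fin d) (Fin d) ℝ)
    (h : IsSymplectic
      (quad A11 A12 A13 A14 A21 A22 A23 A24 A31 A32 A33 A34 A41 A42 A43 A44))
    (hE : IsUnit (Matrix.fromBlocks A11 A13 A21 A23).det) :
    IsUnit (Matrix.fromBlocks A12 A14 A22 A24).det ∧
    (Matrix.fromBlocks A12 A14 A22 A24).det =
      (-1 : ℝ) ^ d * (Matrix.fromBlocks A11 A13 A21 A23).det := by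
  classical
  set E := Matrix.fromBlocks A11 A13 A21 A23 with hEdef
  set F := Matrix.fromBlocks A12 A14 A22 A24 with hFdef
  set G := Matrix.fromBlocks A31 A33 A41 A43 with hGdef
  set H := Matrix.fromBlocks A32 A34 A42 A44 with hHdef
  set Sg : Matrix ((Fin d ⊕ Fin d) ⊕ (Fin d ⊕ Fin d)) ((Fin d ⊕ Fin d) ⊕ (Fin d ⊕ Fin d)) ℝ :=
    quad 1 0 0 0 0 0 1 0 0 1 0 0 0 0 0 1 with hSgdef
  have hMA : quad A11 A12 A13 A14 A21 A22 A23 A24 A31 A32 A33 A34 A41 A42 A43 A44 * Sg =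
      quad A11 A13 A12 A14 A21 A23 A22 A24 A31 A33 A32 A34 A41 A43 A42 A44 := by
    rw [hSgdef]
    simp [quad, Matrix.fromBlocks_multiply, Matrix.fromBlocks_add]
  have hSJS : Sgᵀ * Jmat (Fin d ⊕ Fin d) * Sg =
      quad 0 1 0 0 (-1) 0 0 0 0 0 0 1 0 0 (-1) 0 := by
    rw [hSgdef]
    simp [quad, Jmat, Matrix.fromBlocks_transpose, Matrix.fromBlocks_multiply,
      Matrix.fromBlocks_add, Matrix.fromBlocks_neg]
  have hMJM : (quad A11 A13 A12 A14 A21 A23 A22 A24 A31 A33 A32 A34 A41 A43 A42 A44)ᵀ *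
      Jmat (Fin d ⊕ Fin d) *
      quad A11 A13 A12 A14 A21 A23 A22 A24 A31 A33 A32 A34 A41 A43 A42 A44 =
      quad 0 1 0 0 (-1) 0 0 0 0 0 0 1 0 0 (-1) 0 := by
    rw [← hMA]
    calc (quad A11 A12 A13 A14 A21 A22 A23 A24 A31 A32 A33 A34 A41 A42 A43 A44 * Sg)ᵀ *
        Jmat (Fin d ⊕ Fin d) *
        (quad A11 A12 A13 A14 A21 A22 A23 A24 A31 A32 A33 A34 A41 A42 A43 A44 * Sg) =
        Sgᵀ * ((quad A11 A12 A13 A14 A21 A22 A23 A24 A31 A32 A33 A34 A41 A42 A43 A44)ᵀ *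
          Jmat (Fin d ⊕ Fin d) *
          quad A11 A12 A13 A14 A21 A22 A23 A24 A31 A32 A33 A34 A41 A42 A43 A44) * Sg := by
          rw [Matrix.transpose_mul]; simp only [Matrix.mul_assoc]
    _ = Sgᵀ * Jmat (Fin d ⊕ Fin d) * Sg := by rw [h]
    _ = quad 0 1 0 0 (-1) 0 0 0 0 0 0 1 0 0 (-1) 0 := hSJS
  -- rewrite in terms of E F G H
  have hM2 : (Matrix.fromBlocks E F G H)ᵀ *
      (Matrix.fromBlocks 0 1 (-1) 0 :
        Matrix ((Fin d ⊕ Fin d) ⊕ (Fin d ⊕ Fin d)) ((Fin d ⊕ Fin d) ⊕ (Fin d ⊕ Fin d)) ℝ) *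
      Matrix.fromBlocks E F G H =
      Matrix.fromBlocks (Matrix.fromBlocks 0 1 (-1) 0) (Matrix.fromBlocks 0 0 0 0)
        (Matrix.fromBlocks 0 0 0 0) (Matrix.fromBlocks 0 1 (-1) 0) := hMJM
  rw [Matrix.fromBlocks_transpose, Matrix.fromBlocks_multiply, Matrix.fromBlocks_multiply] at hM2
  simp only [Matrix.mul_zero, Matrix.zero_mul, Matrix.mul_one, Matrix.one_mul,
    Matrix.mul_neg, Matrix.neg_mul, add_zero, zero_add] at hM2
  have r1' := congrArg Matrix.toBlocks₁₁ hM2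
  have r2' := congrArg Matrix.toBlocks₁₂ hM2
  have r4' := congrArg Matrix.toBlocks₂₂ hM2
  simp only [Matrix.toBlocks_fromBlocks₁₁, Matrix.toBlocks_fromBlocks₁₂,
    Matrix.toBlocks_fromBlocks₂₂] at r1' r2' r4'
  have r1 : Eᵀ * G - Gᵀ * E = Matrix.fromBlocks 0 1 (-1) 0 := by
    rw [← r1']; abel
  have hz0 : (Matrix.fromBlocks 0 0 0 0 : Matrix (Fin d ⊕ Fin d) (Fin d ⊕ Fin d) ℝ) = 0 := by
    ext (i | i) (j | j) <;> simp [Matrix.fromBlocks]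
  have r2 : Eᵀ * H - Gᵀ * F = 0 := by
    rw [← hz0, ← r2']; abel
  have r4 : Fᵀ * H - Hᵀ * F = Matrix.fromBlocks 0 1 (-1) 0 := by
    rw [← r4']; abel
  exact core E F G H r1 r2 r4 hE
end

section
/- Let 𝒜 ∈ Sp(2d,ℝ) with submatrices E_𝒜, F_𝒜, ℰ_𝒜, ℱ_𝒜, and let L = [[0, I_d], [I_d, 0]]. If ℰ_𝒜 is invertible, then: (i) F_𝒜 = ℰ_𝒜^{−T} ℱ_𝒜ᵀ E_𝒜; (ii) the matrix 𝔊_𝒜 := L ℰ_𝒜^{−1} E_𝒜 belongs to Sp(d,ℝ); (iii) E_𝒜 is invertible and det(E_𝒜) = (−1)^d det(ℰ_𝒜). In particular, E_𝒜 is invertible if and only if ℰ_𝒜 is invertible. -/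
open Matrix

namespace Stmt5Aux

variable {n : Type*} [DecidableEq n] [Fintype n]

lemma jmat_eq : Jmat n = -(Matrix.J n ℝ) := by
  rw [Matrix.J, Jmat, Matrix.fromBlocks_neg]
  norm_num

lemma isSymplectic_iff {S : Matrix (n ⊕ n) (n ⊕ n) ℝ} :
    IsSymplectic S ↔ S ∈ Matrix.symplecticGroup n ℝ := by
  rw [SymplecticGroup.mem_iff', IsSymplectic, jmat_eq, mul_neg, neg_mul, neg_inj]

lemma jmat_sq : Jmat n * Jmat n = -1 := by
  rw [jmat_eq, neg_mul_neg, Matrix.J_squared]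

lemma det_jmat_sq : det (Jmat n) * det (Jmat n) = 1 := by
  rw [← det_mul, jmat_sq, det_neg, det_one, Fintype.card_sum, mul_one]
  exact Even.neg_one_pow ⟨_, rfl⟩

lemma det_jmat_ne_zero : det (Jmat n) ≠ 0 := fun hc => by
  simpa [hc] using (det_jmat_sq (n := n))

lemma isSymplectic_jmat : IsSymplectic (Jmat n) := by
  unfold IsSymplectic
  have h1 : (Jmat n)ᵀ = -(Jmat n) := by
    rw [jmat_eq]
    simp
  rw [h1, mul_assoc, neg_mul, jmat_sq, mul_neg_one, neg_neg]

lemma det_fromBlocks_conj_nonneg (X Y : Matrix n n ℝ) :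
    0 ≤ (fromBlocks X Y (-Y) X).det := by
  set f : ℝ →+* ℂ := Complex.ofRealHom with hf
  set U : Matrix n n ℂ := X.map f with hU
  set V : Matrix n n ℂ := Y.map f with hV
  set Z : Matrix n n ℂ := U + Complex.I • V with hZ
  set W : Matrix n n ℂ := U - Complex.I • V with hW
  set P : Matrix (n ⊕ n) (n ⊕ n) ℂ :=
    fromBlocks 1 1 (Complex.I • 1) (-(Complex.I • 1)) with hP
  have key : (fromBlocks U V (-V) U) * P = P * (fromBlocks Z 0 0 W) := by
    rw [hP, fromBlocks_multiply, fromBlocks_multiply, Matrix.fromBlocks_inj]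
    refine ⟨?_, ?_, ?_, ?_⟩ <;>
      simp [hZ, hW, Matrix.mul_smul, Matrix.smul_mul, smul_smul, Complex.I_mul_I,
        smul_add, smul_sub, sub_eq_add_neg] <;> abel
  have hdetP : P.det = (-2 * Complex.I) ^ (Fintype.card n) := by
    have h1 : (-(Complex.I • 1) - (Complex.I • 1) * 1 : Matrix n n ℂ)
        = (-2 * Complex.I) • (1 : Matrix n n ℂ) := by
      rw [mul_one, ← neg_smul, ← sub_smul]
      ring_nf
    rw [hP, Matrix.det_fromBlocks_one₁₁, h1, det_smul, det_one, mul_one]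
  have hPne : P.det ≠ 0 := by
    rw [hdetP]
    exact pow_ne_zero _ (by simp [Complex.I_ne_zero])
  have hdet : (fromBlocks U V (-V) U).det = Z.det * W.det := by
    have h2 := congrArg det key
    rw [det_mul, det_mul, det_fromBlocks_zero₂₁] at h2
    rw [mul_comm] at h2
    exact mul_left_cancel₀ hPne h2
  have hstar : Z.map (starRingEnd ℂ) = W := by
    ext i j
    simp [hZ, hW, hU, hV, hf, Matrix.map_apply, Complex.conj_ofReal]
    ring
  have hWdet : W.det = (starRingEnd ℂ) Z.det := by
    rw [RingHom.map_det, RingHom.mapMatrix_apply, hstar]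
  have hreal : (((fromBlocks X Y (-Y) X).det : ℝ) : ℂ) = (fromBlocks U V (-V) U).det := by
    have := (Complex.ofRealHom).map_det (fromBlocks X Y (-Y) X)
    rw [RingHom.mapMatrix_apply] at this
    rw [show ((fromBlocks X Y (-Y) X).map Complex.ofRealHom) = fromBlocks U V (-V) U by
      ext i j
      rcases i with i | i <;> rcases j with j | j <;>
        simp [hU, hV, hf, Matrix.map_apply]] at this
    exact this
  have hfinal : (((fromBlocks X Y (-Y) X).det : ℝ) : ℂ) = ((Complex.normSq Z.det : ℝ) : ℂ) := by
    rw [hreal, hdet, hWdet, Complex.mul_conj]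
  have := Complex.ofReal_injective hfinal
  rw [this]
  exact Complex.normSq_nonneg _

theorem det_one_of_isSymplectic {S : Matrix (n ⊕ n) (n ⊕ n) ℝ}
    (h : IsSymplectic S) : S.det = 1 := by
  have h' := congrArg det h
  rw [det_mul, det_mul, det_transpose] at h'
  have hd2 : S.det * S.det = 1 := by
    apply mul_left_cancel₀ (det_jmat_ne_zero (n := n))
    linear_combination h'
  set W := Jmat n * S * (-(Jmat n)) with hWdef
  have hSW : Sᵀ * W = 1 := by
    have ha : Sᵀ * (Jmat n * S * -(Jmat n)) = (Sᵀ * Jmat n * S) * -(Jmat n) := by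
      rw [← mul_assoc, ← mul_assoc]
    rw [hWdef, ha, h, mul_neg, jmat_sq, neg_neg]
  have hfact : Sᵀ * S + 1 = Sᵀ * (S + W) := by rw [mul_add, hSW]
  have hpos : 0 < det (Sᵀ * S + 1) := by
    apply Matrix.PosDef.det_pos
    apply Matrix.PosDef.posSemidef_add ?_ Matrix.PosDef.one
    simpa [conjTranspose_eq_transpose_of_trivial] using
      Matrix.posSemidef_conjTranspose_mul_self S
  have hS : S = fromBlocks S.toBlocks₁₁ S.toBlocks₁₂ S.toBlocks₂₁ S.toBlocks₂₂ :=
    (fromBlocks_toBlocks S).symm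
  have hnegJ : -(Jmat n) = fromBlocks 0 (-1) 1 0 := by
    rw [Jmat, Matrix.fromBlocks_neg]
    norm_num
  have hW2 : W = fromBlocks S.toBlocks₂₂ (-S.toBlocks₂₁) (-S.toBlocks₁₂) S.toBlocks₁₁ := by
    rw [hWdef]
    conv_lhs => rw [hS]
    rw [hnegJ, Jmat, fromBlocks_multiply, fromBlocks_multiply]
    simp
  have hT : S + W = fromBlocks (S.toBlocks₁₁ + S.toBlocks₂₂) (S.toBlocks₁₂ - S.toBlocks₂₁)
      (-(S.toBlocks₁₂ - S.toBlocks₂₁)) (S.toBlocks₁₁ + S.toBlocks₂₂) := by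
    conv_lhs => rw [hS, hW2]
    rw [fromBlocks_add, Matrix.fromBlocks_inj]
    refine ⟨by abel, by abel, by abel, by abel⟩
  have hTnn : 0 ≤ det (S + W) := by
    rw [hT]
    exact det_fromBlocks_conj_nonneg _ _
  have hSpos : 0 < S.det * det (S + W) := by
    have hb : det (Sᵀ * (S + W)) = S.det * det (S + W) := by rw [det_mul, det_transpose]
    rw [← hb, ← hfact]
    exact hpos
  rcases mul_self_eq_one_iff.mp hd2 with h1 | h1
  · exact h1
  · exfalso
    rw [h1] at hSpos
    linarith

def sw {d : ℕ} : ((Fin d ⊕ Fin d) ⊕ (Fin d ⊕ Fin d)) ≃ ((Fin d ⊕ Fin d) ⊕ (Fin d ⊕ Fin d)) where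
  toFun := Sum.elim (Sum.elim (Sum.inl ∘ Sum.inl) (Sum.inr ∘ Sum.inl))
    (Sum.elim (Sum.inl ∘ Sum.inr) (Sum.inr ∘ Sum.inr))
  invFun := Sum.elim (Sum.elim (Sum.inl ∘ Sum.inl) (Sum.inr ∘ Sum.inl))
    (Sum.elim (Sum.inl ∘ Sum.inr) (Sum.inr ∘ Sum.inr))
  left_inv := by rintro ((a | a) | (a | a)) <;> rfl
  right_inv := by rintro ((a | a) | (a | a)) <;> rfl

lemma sw_sw {d : ℕ} : (⇑(sw (d := d))) ∘ (⇑(sw (d := d))) = id := by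
  funext x
  rcases x with (a | a) | (a | a) <;> rfl

lemma quad_eq {d : ℕ}
    (A11 A12 A13 A14 A21 A22 A23 A24 A31 A32 A33 A34 A41 A42 A43 A44 :
      Matrix (Fin d) (Fin d) ℝ) :
    quad A11 A12 A13 A14 A21 A22 A23 A24 A31 A32 A33 A34 A41 A42 A43 A44 =
      (fromBlocks (fromBlocks A11 A13 A21 A23) (fromBlocks A12 A14 A22 A24)
        (fromBlocks A31 A33 A41 A43) (fromBlocks A32 A34 A42 A44)).submatrix id ⇑sw := by
  ext i j
  rcases i with (i | i) | (i | i) <;> rcases j with (j | j) | (j | j) <;> rfl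

lemma K_eq {d : ℕ} : (Jmat (Fin d ⊕ Fin d)).submatrix ⇑sw ⇑sw =
    fromBlocks (Jmat (Fin d)) 0 0 (Jmat (Fin d)) := by
  ext i j
  rcases i with (i | i) | (i | i) <;> rcases j with (j | j) | (j | j) <;>
    simp [Jmat, sw, Matrix.one_apply]

lemma J_eq_K_submatrix {d : ℕ} : Jmat (Fin d ⊕ Fin d) =
    (fromBlocks (Jmat (Fin d)) 0 0 (Jmat (Fin d))).submatrix ⇑sw ⇑sw := by
  rw [← K_eq, submatrix_submatrix, sw_sw, submatrix_id_id]

lemma conj_neg {Ep E J2 : Matrix n n ℝ} (hEp : IsUnit Ep.det)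
    (h : E * J2 * Eᵀ = -(Ep * J2 * Epᵀ)) :
    (Ep⁻¹ * E) * J2 * (Ep⁻¹ * E)ᵀ = -J2 := by
  have h1 : Ep⁻¹ * Ep = 1 := nonsing_inv_mul _ hEp
  have h2 : Epᵀ * (Ep⁻¹)ᵀ = 1 := by rw [← Matrix.transpose_mul, h1, Matrix.transpose_one]
  calc (Ep⁻¹ * E) * J2 * (Ep⁻¹ * E)ᵀ
      = Ep⁻¹ * (E * J2 * Eᵀ) * (Ep⁻¹)ᵀ := by rw [Matrix.transpose_mul]; noncomm_ring
    _ = Ep⁻¹ * (-(Ep * J2 * Epᵀ)) * (Ep⁻¹)ᵀ := by rw [h]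
    _ = -((Ep⁻¹ * Ep) * J2 * (Epᵀ * (Ep⁻¹)ᵀ)) := by noncomm_ring
    _ = -J2 := by rw [h1, h2, one_mul, mul_one]

lemma flip_conj {H J2 : Matrix n n ℝ} (hH : IsUnit H.det)
    (hJ : J2 * J2 = -1) (h : H * J2 * Hᵀ = -J2) : Hᵀ * J2 * H = -J2 := by
  have hHi : H⁻¹ * H = 1 := nonsing_inv_mul _ hH
  have e1 : J2 * Hᵀ = -(H⁻¹ * J2) := by
    calc J2 * Hᵀ = H⁻¹ * (H * J2 * Hᵀ) := by rw [← mul_assoc, ← mul_assoc, hHi, one_mul]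
      _ = -(H⁻¹ * J2) := by rw [h, mul_neg]
  have e2 : Hᵀ = J2 * (H⁻¹ * J2) := by
    have e3 := congrArg (fun X => J2 * X) e1
    simp only [← mul_assoc, hJ, mul_neg] at e3
    rw [neg_one_mul] at e3
    have := neg_injective e3
    rw [this, mul_assoc]
  rw [e2]
  calc (J2 * (H⁻¹ * J2)) * J2 * H = J2 * H⁻¹ * (J2 * J2) * H := by noncomm_ring
    _ = -(J2 * (H⁻¹ * H)) := by rw [hJ]; noncomm_ring
    _ = -J2 := by rw [hHi, mul_one]

lemma L_transpose {d : ℕ} : (Lmat (d := d))ᵀ = Lmat := by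
  simp [Lmat, fromBlocks_transpose]

lemma LJL {d : ℕ} : Lmat (d := d) * Jmat (Fin d) * Lmat = -(Jmat (Fin d)) := by
  rw [Lmat, Jmat, fromBlocks_multiply, fromBlocks_multiply, Matrix.fromBlocks_neg]
  norm_num

lemma L_eq {d : ℕ} : Lmat (d := d) = Jmat (Fin d) * fromBlocks (-1) 0 0 1 := by
  rw [Lmat, Jmat, fromBlocks_multiply]
  norm_num

lemma det_L {d : ℕ} : det (Lmat (d := d)) = (-1 : ℝ) ^ d := by
  rw [L_eq, det_mul, det_one_of_isSymplectic isSymplectic_jmat, one_mul,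
    det_fromBlocks_zero₂₁, det_one, mul_one, show ((-1 : Matrix (Fin d) (Fin d) ℝ)) = -(1) from rfl,
    det_neg, det_one, mul_one, Fintype.card_fin]

lemma conj_submatrix {N : Type*} [Fintype N] [DecidableEq N] (e : N ≃ N) (P Q : Matrix N N ℝ) :
    (P.submatrix id ⇑e)ᵀ * Q * (P.submatrix id ⇑e) = (Pᵀ * Q * P).submatrix ⇑e ⇑e := by
  have h1 : (P.submatrix id ⇑e)ᵀ = Pᵀ.submatrix ⇑e ⇑(Equiv.refl N) := by
    rw [transpose_submatrix]; rfl
  have h3 : P.submatrix id ⇑e = P.submatrix ⇑(Equiv.refl N) ⇑e := rfl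
  rw [h1, h3]
  conv_lhs => rw [show Q = Q.submatrix ⇑(Equiv.refl N) ⇑(Equiv.refl N) from rfl]
  rw [Matrix.submatrix_mul_equiv, Matrix.submatrix_mul_equiv]

end Stmt5Aux

/-- if ℰ_𝒜 is invertible then (i) F_𝒜 = ℰ_𝒜^{−T} ℱ_𝒜ᵀ E_𝒜, (ii)
𝔊_𝒜 = L ℰ_𝒜⁻¹ E_𝒜 is symplectic, (iii) E_𝒜 is invertible with
det(E_𝒜) = (−1)^d det(ℰ_𝒜); in particular E_𝒜 is invertible iff ℰ_𝒜 is. -/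
theorem stmt5 {d : ℕ}
    (A11 A12 A13 A14 A21 A22 A23 A24 A31 A32 A33 A34 A41 A42 A43 A44 :
      Matrix (Fin d) (Fin d) ℝ)
    (h : IsSymplectic
      (quad A11 A12 A13 A14 A21 A22 A23 A24 A31 A32 A33 A34 A41 A42 A43 A44)) :
    (IsUnit (Matrix.fromBlocks A12 A14 A22 A24).det →
      Matrix.fromBlocks A31 A33 A41 A43 =
        ((Matrix.fromBlocks A12 A14 A22 A24)ᵀ)⁻¹ *
          (Matrix.fromBlocks A32 A34 A42 A44)ᵀ * Matrix.fromBlocks A11 A13 A21 A23 ∧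
      IsSymplectic
        (Lmat * (Matrix.fromBlocks A12 A14 A22 A24)⁻¹ *
          Matrix.fromBlocks A11 A13 A21 A23) ∧
      IsUnit (Matrix.fromBlocks A11 A13 A21 A23).det ∧
      (Matrix.fromBlocks A11 A13 A21 A23).det =
        (-1 : ℝ) ^ d * (Matrix.fromBlocks A12 A14 A22 A24).det) ∧
    (IsUnit (Matrix.fromBlocks A11 A13 A21 A23).det ↔
      IsUnit (Matrix.fromBlocks A12 A14 A22 A24).det) := by
  classical
  set E := Matrix.fromBlocks A11 A13 A21 A23 with hE
  set Ep := Matrix.fromBlocks A12 A14 A22 A24 with hEp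
  set Fm := Matrix.fromBlocks A31 A33 A41 A43 with hFm
  set Fp := Matrix.fromBlocks A32 A34 A42 A44 with hFp
  set M : Matrix ((Fin d ⊕ Fin d) ⊕ (Fin d ⊕ Fin d)) ((Fin d ⊕ Fin d) ⊕ (Fin d ⊕ Fin d)) ℝ :=
    fromBlocks E Ep Fm Fp with hM
  have hq := Stmt5Aux.quad_eq A11 A12 A13 A14 A21 A22 A23 A24 A31 A32 A33 A34 A41 A42 A43 A44
  rw [← hE, ← hEp, ← hFm, ← hFp, ← hM] at hq
  -- row form of symplecticity
  have hmem := Stmt5Aux.isSymplectic_iff.mp h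
  have hrow0 := SymplecticGroup.mem_iff.mp hmem
  have hrow1 : quad A11 A12 A13 A14 A21 A22 A23 A24 A31 A32 A33 A34 A41 A42 A43 A44 *
      Jmat (Fin d ⊕ Fin d) *
      (quad A11 A12 A13 A14 A21 A22 A23 A24 A31 A32 A33 A34 A41 A42 A43 A44)ᵀ =
        Jmat (Fin d ⊕ Fin d) := by
    rw [Stmt5Aux.jmat_eq, mul_neg, neg_mul, neg_inj]
    exact hrow0
  rw [hq, Stmt5Aux.J_eq_K_submatrix (d := d)] at hrow1
  rw [Matrix.transpose_submatrix, Matrix.submatrix_mul_equiv, Matrix.submatrix_mul_equiv,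
    Matrix.submatrix_id_id] at hrow1
  rw [← Stmt5Aux.J_eq_K_submatrix (d := d)] at hrow1
  -- hrow1 : M * fromBlocks J2 0 0 J2 * Mᵀ = Jmat (Fin d ⊕ Fin d)
  -- column form
  have hcol : Mᵀ * Jmat (Fin d ⊕ Fin d) * M = fromBlocks (Jmat (Fin d)) 0 0 (Jmat (Fin d)) := by
    have h' := h
    unfold IsSymplectic at h'
    rw [hq, Stmt5Aux.conj_submatrix] at h'
    have h2 := congrArg (fun X => X.submatrix (⇑(Stmt5Aux.sw (d := d))) (⇑(Stmt5Aux.sw (d := d)))) h'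
    simp only [Matrix.submatrix_submatrix, Stmt5Aux.sw_sw, Matrix.submatrix_id_id] at h2
    rw [Stmt5Aux.K_eq] at h2
    exact h2
  -- extract block identities
  rw [hM, fromBlocks_transpose, show Jmat (Fin d ⊕ Fin d) = fromBlocks 0 1 (-1) 0 from rfl,
    fromBlocks_multiply, fromBlocks_multiply, Matrix.fromBlocks_inj] at hrow1
  obtain ⟨r11, r12, r21, r22⟩ := hrow1
  rw [hM, fromBlocks_transpose, show Jmat (Fin d ⊕ Fin d) = fromBlocks 0 1 (-1) 0 from rfl,
    fromBlocks_multiply, fromBlocks_multiply, Matrix.fromBlocks_inj] at hcol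
  obtain ⟨c11, c12, c21, c22⟩ := hcol
  have hS1 : E * Jmat (Fin d) * Eᵀ = -(Ep * Jmat (Fin d) * Epᵀ) := by
    have hx : E * Jmat (Fin d) * Eᵀ + Ep * Jmat (Fin d) * Epᵀ = 0 := by
      calc E * Jmat (Fin d) * Eᵀ + Ep * Jmat (Fin d) * Epᵀ
          = (E * Jmat (Fin d) + Ep * 0) * Eᵀ + (E * 0 + Ep * Jmat (Fin d)) * Epᵀ := by noncomm_ring
        _ = 0 := r11
    exact add_eq_zero_iff_eq_neg.mp hx
  have hT3 : Epᵀ * Fm = Fpᵀ * E := by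
    calc Epᵀ * Fm
        = ((Epᵀ * 0 + Fpᵀ * (-1)) * E + (Epᵀ * 1 + Fpᵀ * 0) * Fm) + Fpᵀ * E := by noncomm_ring
      _ = 0 + Fpᵀ * E := by rw [c21]
      _ = Fpᵀ * E := zero_add _
  -- squared determinant relation
  have hJne : det (Jmat (Fin d)) ≠ 0 := Stmt5Aux.det_jmat_ne_zero
  have hee : ((-1 : ℝ)) ^ (d + d) = 1 := Even.neg_one_pow ⟨d, rfl⟩
  have h7 : det E * det E = det Ep * det Ep := by
    have h6 := congrArg det hS1
    rw [det_mul, det_mul, det_transpose, det_neg, det_mul, det_mul, det_transpose,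
      Fintype.card_sum, Fintype.card_fin, hee, one_mul] at h6
    apply mul_left_cancel₀ hJne
    linear_combination h6
  refine ⟨fun hEpu => ?_, ?_⟩
  · -- main part, assuming Ep invertible
    have hEpne : det Ep ≠ 0 := hEpu.ne_zero
    have hEpTu : IsUnit (Epᵀ).det := by rwa [det_transpose]
    have hH : (Ep⁻¹ * E) * Jmat (Fin d) * (Ep⁻¹ * E)ᵀ = -(Jmat (Fin d)) :=
      Stmt5Aux.conj_neg hEpu hS1
    have hHd : det (Ep⁻¹ * E) * det (Ep⁻¹ * E) = 1 := by
      have hy := congrArg det hH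
      rw [det_mul, det_mul, det_transpose, det_neg, Fintype.card_sum, Fintype.card_fin,
        hee, one_mul] at hy
      apply mul_left_cancel₀ hJne
      linear_combination hy
    have hHu : IsUnit (Ep⁻¹ * E).det := isUnit_iff_ne_zero.mpr (by
      intro hc
      rw [hc, mul_zero] at hHd
      exact zero_ne_one hHd)
    have hflip := Stmt5Aux.flip_conj hHu Stmt5Aux.jmat_sq hH
    have hGsymp : IsSymplectic (Lmat * Ep⁻¹ * E) := by
      unfold IsSymplectic
      calc (Lmat * Ep⁻¹ * E)ᵀ * Jmat (Fin d) * (Lmat * Ep⁻¹ * E)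
          = (Ep⁻¹ * E)ᵀ * (Lmatᵀ * Jmat (Fin d) * Lmat) * (Ep⁻¹ * E) := by
            simp only [Matrix.transpose_mul]
            noncomm_ring
        _ = (Ep⁻¹ * E)ᵀ * (-(Jmat (Fin d))) * (Ep⁻¹ * E) := by
            rw [Stmt5Aux.L_transpose, Stmt5Aux.LJL]
        _ = -((Ep⁻¹ * E)ᵀ * Jmat (Fin d) * (Ep⁻¹ * E)) := by noncomm_ring
        _ = Jmat (Fin d) := by rw [hflip, neg_neg]
    have hdetG := Stmt5Aux.det_one_of_isSymplectic hGsymp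
    rw [det_mul, det_mul, Stmt5Aux.det_L, det_nonsing_inv, Ring.inverse_eq_inv] at hdetG
    have hdd : ((-1 : ℝ) ^ d) * ((-1 : ℝ) ^ d) = 1 := by rw [← pow_add]; exact hee
    have h9 : det Ep = (-1 : ℝ) ^ d * det E := by
      calc det Ep = det Ep * ((-1 : ℝ) ^ d * (det Ep)⁻¹ * det E) := by rw [hdetG, mul_one]
        _ = (-1 : ℝ) ^ d * det E * (det Ep * (det Ep)⁻¹) := by ring
        _ = (-1 : ℝ) ^ d * det E := by rw [mul_inv_cancel₀ hEpne, mul_one]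
    have hdetE : det E = (-1 : ℝ) ^ d * det Ep := by
      linear_combination (-((-1 : ℝ) ^ d)) * h9 - det E * hdd
    refine ⟨?_, hGsymp, ?_, hdetE⟩
    · -- (i)
      rw [mul_assoc, ← hT3, ← mul_assoc, nonsing_inv_mul _ hEpTu, one_mul]
    · -- E invertible
      refine isUnit_iff_ne_zero.mpr ?_
      rw [hdetE]
      exact mul_ne_zero (pow_ne_zero _ (by norm_num)) hEpne
  · -- the iff
    rw [isUnit_iff_ne_zero, isUnit_iff_ne_zero]
    constructor
    · intro hu hc
      rw [hc, mul_zero] at h7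
      exact hu (mul_self_eq_zero.mp h7)
    · intro hu hc
      rw [hc, mul_zero] at h7
      exact hu (mul_self_eq_zero.mp h7.symm)
end

section
/- Let 𝒜 ∈ Sp(2d,ℝ) with d×d blocks (A_{ij}), submatrices E_𝒜, F_𝒜, and P = [[0, I_d], [0, 0]]. Then the 2d×2d matrix M_𝒜 := E_𝒜ᵀ F_𝒜 − P is symmetric, and M_𝒜 = [[A_{11}ᵀA_{31} + A_{21}ᵀA_{41}, A_{31}ᵀA_{13} + A_{41}ᵀA_{23}], [A_{13}ᵀA_{31} + A_{23}ᵀA_{41}, A_{13}ᵀA_{33} + A_{23}ᵀA_{43}]]. -/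
open Matrix

/-- M_𝒜 = E_𝒜ᵀF_𝒜 − P is symmetric, with the explicit block form. -/
theorem stmt6 {d : ℕ}
    (A11 A12 A13 A14 A21 A22 A23 A24 A31 A32 A33 A34 A41 A42 A43 A44 :
      Matrix (Fin d) (Fin d) ℝ)
    (h : IsSymplectic
      (quad A11 A12 A13 A14 A21 A22 A23 A24 A31 A32 A33 A34 A41 A42 A43 A44)) :
    ((Matrix.fromBlocks A11 A13 A21 A23)ᵀ * Matrix.fromBlocks A31 A33 A41 A43 - Pmat)ᵀ =
      (Matrix.fromBlocks A11 A13 A21 A23)ᵀ * Matrix.fromBlocks A31 A33 A41 A43 - Pmat ∧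
    (Matrix.fromBlocks A11 A13 A21 A23)ᵀ * Matrix.fromBlocks A31 A33 A41 A43 - Pmat =
      Matrix.fromBlocks (A11ᵀ * A31 + A21ᵀ * A41) (A31ᵀ * A13 + A41ᵀ * A23)
        (A13ᵀ * A31 + A23ᵀ * A41) (A13ᵀ * A33 + A23ᵀ * A43) := by
  simp only [IsSymplectic, quad, Jmat, Matrix.fromBlocks_transpose, Matrix.fromBlocks_multiply,
    Matrix.transpose_zero, Matrix.transpose_one, Matrix.mul_zero, Matrix.zero_mul,
    Matrix.mul_one, Matrix.one_mul, Matrix.mul_neg, Matrix.neg_mul,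
    add_zero, zero_add, neg_zero, ← Matrix.fromBlocks_one, ← Matrix.fromBlocks_zero,
    Matrix.fromBlocks_neg, Matrix.fromBlocks_add, Matrix.fromBlocks_inj] at h
  obtain ⟨⟨ha, -, -, -⟩, ⟨hb, -, -, -⟩, -, ⟨hc, -, -, -⟩⟩ := h
  have ha' : A11ᵀ * A31 + A21ᵀ * A41 = A31ᵀ * A11 + A41ᵀ * A21 := by
    rw [← sub_eq_zero, ← ha]; abel
  have hc' : A13ᵀ * A33 + A23ᵀ * A43 = A33ᵀ * A13 + A43ᵀ * A23 := by
    rw [← sub_eq_zero, ← hc]; abel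
  have hb' : A11ᵀ * A33 + A21ᵀ * A43 = A31ᵀ * A13 + A41ᵀ * A23 + 1 := by
    rw [← hb]; abel
  have key : (Matrix.fromBlocks A11 A13 A21 A23)ᵀ * Matrix.fromBlocks A31 A33 A41 A43 - Pmat =
      Matrix.fromBlocks (A11ᵀ * A31 + A21ᵀ * A41) (A31ᵀ * A13 + A41ᵀ * A23)
        (A13ᵀ * A31 + A23ᵀ * A41) (A13ᵀ * A33 + A23ᵀ * A43) := by
    simp only [Pmat, sub_eq_add_neg, Matrix.fromBlocks_neg, Matrix.fromBlocks_transpose,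
      Matrix.fromBlocks_multiply, Matrix.fromBlocks_add, neg_zero, add_zero,
      Matrix.fromBlocks_inj]
    refine ⟨trivial, ?_, trivial, trivial⟩
    rw [hb']; abel
  refine ⟨?_, key⟩
  rw [key, Matrix.fromBlocks_transpose]
  simp only [Matrix.transpose_add, Matrix.transpose_mul, Matrix.transpose_transpose,
    Matrix.fromBlocks_inj]
  exact ⟨ha'.symm, trivial, trivial, hc'.symm⟩
end

section
/- Let 𝒜 ∈ Sp(2d,ℝ) with submatrices E_𝒜, F_𝒜, ℰ_𝒜, and assume E_𝒜 is invertible. Set M_𝒜 = E_𝒜ᵀF_𝒜 − P, G_𝒜 = L E_𝒜^{−1} ℰ_𝒜, and write G_𝒜 in d×d blocks as G_𝒜 = [[A, B], [C, D]]. Then 𝒜 = 𝒟_{E_𝒜^{−1}} · V_{M_𝒜} · V_Lᵀ · Lift(G_𝒜), where 𝒟_{E_𝒜^{−1}} = [[E_𝒜, 0], [0, E_𝒜^{−T}]] and V_{M_𝒜} = [[I_{2d}, 0], [M_𝒜, I_{2d}]] and V_Lᵀ = [[I_{2d}, L], [0, I_{2d}]] (in 2d×2d blocks), and Lift(G_𝒜)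 is the 4d×4d matrix with d×d blocks [[I, 0, 0, 0], [0, A, 0, B], [0, 0, I, 0], [0, C, 0, D]]. -/
open Matrix

namespace Stmt7Aux

variable {d : ℕ}

/-- Abbreviation for 2d×2d real matrices. -/
abbrev M2 (d : ℕ) := Matrix (Fin d ⊕ Fin d) (Fin d ⊕ Fin d) ℝ

/-- The projection onto the first d coordinates. -/
def P1 {d : ℕ} : M2 d := Matrix.fromBlocks 1 0 0 0

lemma hP2 : (Matrix.fromBlocks 0 0 0 1 : M2 d) = 1 - P1 := by
  rw [← Matrix.fromBlocks_one (l := Fin d) (m := Fin d) (α := ℝ), P1, eq_sub_iff_add_eq,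
    Matrix.fromBlocks_add]
  simp

-- splitting of Lmat
lemma cLsplit (x : M2 d) : Lmat * x = Pmat * x + Pmatᵀ * x := by
  rw [← add_mul]
  congr 1
  simp [Lmat, Pmat, Matrix.fromBlocks_transpose, Matrix.fromBlocks_add]

-- concrete binary products
lemma b7 : (Pmat : M2 d) * P1 = 0 := by
  simp [P1, Pmat, Matrix.fromBlocks_multiply, Matrix.fromBlocks_zero]
lemma b8 : (Pmat : M2 d) * Pmatᵀ = P1 := by
  simp [P1, Pmat, Matrix.fromBlocks_multiply, Matrix.fromBlocks_transpose]
lemma b9 : (Pmat : M2 d) * Pmat = 0 := by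
  simp [Pmat, Matrix.fromBlocks_multiply, Matrix.fromBlocks_zero]
lemma b10 : (Pmatᵀ : M2 d) * P1 = Pmatᵀ := by
  simp [P1, Pmat, Matrix.fromBlocks_multiply, Matrix.fromBlocks_transpose]
lemma b14 : (Pmatᵀ : M2 d) * Pmat = 1 - P1 := by
  rw [← hP2]
  simp [Pmat, Matrix.fromBlocks_multiply, Matrix.fromBlocks_transpose]
lemma b15 : (Pmatᵀ : M2 d) * Pmatᵀ = 0 := by
  simp [Pmat, Matrix.fromBlocks_multiply, Matrix.fromBlocks_transpose,
    Matrix.fromBlocks_zero]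
lemma b11 : (P1 : M2 d) * P1 = P1 := by
  simp [P1, Matrix.fromBlocks_multiply]
lemma b12 : (P1 : M2 d) * Pmat = Pmat := by
  simp [P1, Pmat, Matrix.fromBlocks_multiply]
lemma b13 : (P1 : M2 d) * Pmatᵀ = 0 := by
  simp [P1, Pmat, Matrix.fromBlocks_multiply, Matrix.fromBlocks_transpose,
    Matrix.fromBlocks_zero]

-- continuation versions
lemma c7 (x : M2 d) : Pmat * (P1 * x) = 0 := by rw [← mul_assoc, b7, zero_mul]
lemma c8 (x : M2 d) : Pmat * (Pmatᵀ * x) = P1 * x := by rw [← mul_assoc, b8]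
lemma c9 (x : M2 d) : Pmat * (Pmat * x) = 0 := by rw [← mul_assoc, b9, zero_mul]
lemma c10 (x : M2 d) : Pmatᵀ * (P1 * x) = Pmatᵀ * x := by rw [← mul_assoc, b10]
lemma c14 (x : M2 d) : Pmatᵀ * (Pmat * x) = x - P1 * x := by
  rw [← mul_assoc, b14, sub_mul, one_mul]
lemma c15 (x : M2 d) : Pmatᵀ * (Pmatᵀ * x) = 0 := by rw [← mul_assoc, b15, zero_mul]
lemma c11 (x : M2 d) : P1 * (P1 * x) = P1 * x := by rw [← mul_assoc, b11]
lemma c12 (x : M2 d) : P1 * (Pmat * x) = Pmat * x := by rw [← mul_assoc, b12]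
lemma c13 (x : M2 d) : P1 * (Pmatᵀ * x) = 0 := by rw [← mul_assoc, b13, zero_mul]

-- lift block lemmas
lemma liftB11 (G : M2 d) :
    (Matrix.fromBlocks 1 0 0 G.toBlocks₁₁ : M2 d) = P1 + Pmatᵀ * G * Pmat := by
  conv_rhs => rw [← Matrix.fromBlocks_toBlocks G]
  simp [P1, Pmat, Matrix.fromBlocks_multiply, Matrix.fromBlocks_transpose,
    Matrix.fromBlocks_add]

lemma liftB12 (G : M2 d) :
    (Matrix.fromBlocks 0 0 0 G.toBlocks₁₂ : M2 d) = Pmatᵀ * G * (1 - P1) := by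
  rw [← hP2]
  conv_rhs => rw [← Matrix.fromBlocks_toBlocks G]
  simp [Pmat, Matrix.fromBlocks_multiply, Matrix.fromBlocks_transpose]

lemma liftB21 (G : M2 d) :
    (Matrix.fromBlocks 0 0 0 G.toBlocks₂₁ : M2 d) = (1 - P1) * G * Pmat := by
  rw [← hP2]
  conv_rhs => rw [← Matrix.fromBlocks_toBlocks G]
  simp [Pmat, Matrix.fromBlocks_multiply]

lemma liftB22 (G : M2 d) :
    (Matrix.fromBlocks 1 0 0 G.toBlocks₂₂ : M2 d) = P1 + (1 - P1) * G * (1 - P1) := by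
  rw [← hP2]
  conv_rhs => rw [← Matrix.fromBlocks_toBlocks G]
  simp [P1, Pmat, Matrix.fromBlocks_multiply, Matrix.fromBlocks_add]

end Stmt7Aux

open Stmt7Aux in
/-- factorization 𝒜 = 𝒟_{E_𝒜⁻¹} V_{M_𝒜} V_Lᵀ Lift(G_𝒜) for
shift-invertible 𝒜 ∈ Sp(2d,ℝ). -/
theorem stmt7 {d : ℕ}
    (A11 A12 A13 A14 A21 A22 A23 A24 A31 A32 A33 A34 A41 A42 A43 A44 :
      Matrix (Fin d) (Fin d) ℝ)
    (h : IsSymplectic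
      (quad A11 A12 A13 A14 A21 A22 A23 A24 A31 A32 A33 A34 A41 A42 A43 A44))
    (hE : IsUnit (Matrix.fromBlocks A11 A13 A21 A23).det) :
    quad A11 A12 A13 A14 A21 A22 A23 A24 A31 A32 A33 A34 A41 A42 A43 A44 =
      Matrix.fromBlocks (Matrix.fromBlocks A11 A13 A21 A23) 0 0
          (((Matrix.fromBlocks A11 A13 A21 A23)⁻¹)ᵀ) *
      Matrix.fromBlocks 1 0
          ((Matrix.fromBlocks A11 A13 A21 A23)ᵀ * Matrix.fromBlocks A31 A33 A41 A43 - Pmat) 1 *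
      Matrix.fromBlocks 1 Lmat 0 1 *
      quad 1 0 0 0
        0 ((Lmat * (Matrix.fromBlocks A11 A13 A21 A23)⁻¹ *
              Matrix.fromBlocks A12 A14 A22 A24).toBlocks₁₁)
        0 ((Lmat * (Matrix.fromBlocks A11 A13 A21 A23)⁻¹ *
              Matrix.fromBlocks A12 A14 A22 A24).toBlocks₁₂)
        0 0 1 0
        0 ((Lmat * (Matrix.fromBlocks A11 A13 A21 A23)⁻¹ *
              Matrix.fromBlocks A12 A14 A22 A24).toBlocks₂₁)
        0 ((Lmat * (Matrix.fromBlocks A11 A13 A21 A23)⁻¹ *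
              Matrix.fromBlocks A12 A14 A22 A24).toBlocks₂₂) := by
  set E : M2 d := Matrix.fromBlocks A11 A13 A21 A23 with hEdef
  set F : M2 d := Matrix.fromBlocks A31 A33 A41 A43 with hFdef
  set Ec : M2 d := Matrix.fromBlocks A12 A14 A22 A24 with hEcdef
  have hFcdef : True := trivial
  set Fc : M2 d := Matrix.fromBlocks A32 A34 A42 A44 with hFcdef'
  set Cmat : Matrix ((Fin d ⊕ Fin d) ⊕ (Fin d ⊕ Fin d)) ((Fin d ⊕ Fin d) ⊕ (Fin d ⊕ Fin d)) ℝ :=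
    Matrix.fromBlocks P1 Pmatᵀ Pmat (Matrix.fromBlocks 0 0 0 1) with hCdef
  have hEK : E * E⁻¹ = 1 := Matrix.mul_nonsing_inv E hE
  have cEK : ∀ x : M2 d, E * (E⁻¹ * x) = x := fun x => by rw [← mul_assoc, hEK, one_mul]
  have cKtEt : ∀ x : M2 d, (E⁻¹)ᵀ * (Eᵀ * x) = x := fun x => by
    rw [← mul_assoc, ← Matrix.transpose_mul, hEK, Matrix.transpose_one, one_mul]
  -- the column-permutation identity
  have hS : quad A11 A12 A13 A14 A21 A22 A23 A24 A31 A32 A33 A34 A41 A42 A43 A44 =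
      Matrix.fromBlocks E Ec F Fc * Cmat := by
    simp [hCdef, hEdef, hFdef, hEcdef, hFcdef', quad, P1, Pmat,
      Matrix.fromBlocks_multiply, Matrix.fromBlocks_transpose, Matrix.fromBlocks_add]
  have hCC : Cmat * Cmat = 1 := by
    simp [hCdef, P1, Pmat, Matrix.fromBlocks_multiply, Matrix.fromBlocks_transpose,
      Matrix.fromBlocks_add, Matrix.fromBlocks_one]
  have hCsymm : Cmatᵀ = Cmat := by
    simp [hCdef, P1, Pmat, Matrix.fromBlocks_transpose]
  have hCJC : Cmat * Jmat (Fin d ⊕ Fin d) * Cmat =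
      Matrix.fromBlocks (Pmat - Pmatᵀ) 0 0 (Pmat - Pmatᵀ) := by
    simp [hCdef, Jmat, P1, Pmat, Matrix.fromBlocks_multiply, Matrix.fromBlocks_transpose,
      Matrix.fromBlocks_add, Matrix.fromBlocks_neg, sub_eq_add_neg, Matrix.fromBlocks_zero]
  -- symplectic relations in the E/F/Ec/Fc arrangement
  replace h : (quad A11 A12 A13 A14 A21 A22 A23 A24 A31 A32 A33 A34 A41 A42 A43 A44)ᵀ *
      Jmat (Fin d ⊕ Fin d) *
      quad A11 A12 A13 A14 A21 A22 A23 A24 A31 A32 A33 A34 A41 A42 A43 A44 =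
      Jmat (Fin d ⊕ Fin d) := h
  rw [hS] at h
  have h3 : Cmat * ((Matrix.fromBlocks E Ec F Fc * Cmat)ᵀ * Jmat (Fin d ⊕ Fin d) *
      (Matrix.fromBlocks E Ec F Fc * Cmat)) * Cmat =
      Cmat * Jmat (Fin d ⊕ Fin d) * Cmat := by rw [h]
  rw [Matrix.transpose_mul, hCsymm] at h3
  have h4 : (Matrix.fromBlocks E Ec F Fc)ᵀ * Jmat (Fin d ⊕ Fin d) *
      Matrix.fromBlocks E Ec F Fc =
      Matrix.fromBlocks (Pmat - Pmatᵀ) 0 0 (Pmat - Pmatᵀ) := by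
    rw [← hCJC, ← h3]
    simp only [← mul_assoc]
    rw [hCC, one_mul, mul_assoc _ Cmat Cmat, hCC, mul_one]
  simp only [Matrix.fromBlocks_transpose, Matrix.fromBlocks_multiply, Jmat,
    Matrix.mul_zero, Matrix.zero_mul, Matrix.mul_one, Matrix.one_mul, mul_neg_one,
    add_zero, zero_add, neg_mul] at h4
  rw [Matrix.fromBlocks_inj] at h4
  obtain ⟨e11, e12, e21, e22⟩ := h4
  have key1 : Eᵀ * F = Pmat - Pmatᵀ + Fᵀ * E := by rw [← e11]; abel
  have key2 : Eᵀ * Fc = Fᵀ * Ec := by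
    have h5 := e12
    rw [neg_add_eq_zero] at h5
    exact h5.symm
  have hFcEq : Fc = (E⁻¹)ᵀ * (Fᵀ * Ec) := by
    conv_lhs => rw [← cKtEt Fc]
    rw [key2]
  have cFK : ∀ x : M2 d, F * (E⁻¹ * x) =
      (E⁻¹)ᵀ * (Pmat * (E⁻¹ * x)) - (E⁻¹)ᵀ * (Pmatᵀ * (E⁻¹ * x)) + (E⁻¹)ᵀ * (Fᵀ * x) := by
    intro x
    conv_lhs => rw [← cKtEt (F * (E⁻¹ * x)), ← mul_assoc Eᵀ F, key1]
    rw [add_mul, sub_mul, mul_assoc Fᵀ E, cEK, mul_add, mul_sub]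
  rw [hS]
  simp only [quad]
  rw [liftB11, liftB12, liftB21, liftB22]
  rw [hCdef]
  simp only [Matrix.fromBlocks_multiply, mul_one, one_mul, mul_zero,
    zero_mul, add_zero, zero_add]
  rw [Matrix.fromBlocks_inj]
  refine ⟨?_, ?_, ?_, ?_⟩ <;>
    · simp only [hFcEq, hP2, cLsplit, c7, c8, c9, c10, c11, c12, c13, c14, c15,
        b7, b8, b9, b10, b11, b12, b13, b14, b15,
        cEK, cKtEt, cFK, mul_add, add_mul, mul_sub, sub_mul, mul_assoc, mul_one, one_mul,
        mul_zero, zero_mul, add_zero, zero_add, sub_zero, zero_sub, neg_neg]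
      abel
end

section
/- Let 𝒜 ∈ Sp(2d,ℝ) with submatrices E_𝒜, ℰ_𝒜, and assume E_𝒜 is invertible. Let L = [[0, I_d], [I_d, 0]], G_𝒜 = L E_𝒜^{−1} ℰ_𝒜 with d×d blocks G_𝒜 = [[A, B], [C, D]], let Ḡ_𝒜 = [[A, −B], [−C, D]], δ_𝒜 := J Ḡ_𝒜, and Q = [[I_d, 0], [0, −I_d]]. Then δ_𝒜^{−1} E_𝒜^{−1} = −Q ℰ_𝒜^{−1}; equivalently, δ_𝒜 = −E_𝒜^{−1} ℰ_𝒜 Q. -/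
open Matrix

section Helpers

lemma Jmat_mul_Jmat (n : Type*) [DecidableEq n] [Fintype n] :
    Jmat n * Jmat n = -1 := by
  simp [Jmat, Matrix.fromBlocks_multiply, Matrix.fromBlocks_neg, ← Matrix.fromBlocks_one, neg_neg]

lemma Lmat_mul_Lmat {d : ℕ} : (Lmat (d := d)) * Lmat = 1 := by
  simp [Lmat, Matrix.fromBlocks_multiply, ← Matrix.fromBlocks_one]

lemma Qmat_mul_Qmat {d : ℕ} : (Qmat (d := d)) * Qmat = 1 := by
  simp [Qmat, Matrix.fromBlocks_multiply, Matrix.fromBlocks_neg, ← Matrix.fromBlocks_one, neg_neg]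

lemma delta_form {d : ℕ} (M : Matrix (Fin d ⊕ Fin d) (Fin d ⊕ Fin d) ℝ) :
    Jmat (Fin d) * Matrix.fromBlocks M.toBlocks₁₁ (-M.toBlocks₁₂) (-M.toBlocks₂₁) M.toBlocks₂₂
      = -(Lmat * M * Qmat) := by
  conv_rhs => rw [← Matrix.fromBlocks_toBlocks M]
  simp [Jmat, Lmat, Qmat, Matrix.fromBlocks_multiply, Matrix.fromBlocks_neg, neg_neg]

lemma other_symplectic {n : Type*} [DecidableEq n] [Fintype n]
    {S : Matrix (n ⊕ n) (n ⊕ n) ℝ} (h : IsSymplectic S) :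
    S * Jmat n * Sᵀ = Jmat n := by
  have h1 : -(Jmat n) * (Sᵀ * Jmat n * S) = 1 := by
    rw [h, neg_mul, Jmat_mul_Jmat, neg_neg]
  have h1' : (-(Jmat n) * Sᵀ * Jmat n) * S = 1 := by
    simp only [mul_assoc] at h1 ⊢; exact h1
  have h2 : S * (-(Jmat n) * Sᵀ * Jmat n) = 1 := mul_eq_one_comm.mp h1'
  have h4 : S * (-(Jmat n) * Sᵀ * Jmat n) * -(Jmat n) = -(Jmat n) := by rw [h2, one_mul]
  simp only [mul_assoc, neg_mul, mul_neg, neg_neg, Jmat_mul_Jmat, mul_one] at h4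
  simpa [mul_assoc] using h4

lemma EJE {d : ℕ} {A11 A12 A13 A14 A21 A22 A23 A24 A31 A32 A33 A34 A41 A42 A43 A44 :
    Matrix (Fin d) (Fin d) ℝ}
    (h : IsSymplectic
      (quad A11 A12 A13 A14 A21 A22 A23 A24 A31 A32 A33 A34 A41 A42 A43 A44)) :
    Matrix.fromBlocks A11 A13 A21 A23 * Jmat (Fin d) * (Matrix.fromBlocks A11 A13 A21 A23)ᵀ
      + Matrix.fromBlocks A12 A14 A22 A24 * Jmat (Fin d) * (Matrix.fromBlocks A12 A14 A22 A24)ᵀ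
      = 0 := by
  have h2 := other_symplectic h
  have h3 := congrArg Matrix.toBlocks₁₁ h2
  simp only [quad, Jmat, Matrix.fromBlocks_transpose, Matrix.fromBlocks_multiply,
    Matrix.toBlocks_fromBlocks₁₁, Matrix.mul_zero, Matrix.zero_mul, Matrix.mul_one,
    Matrix.neg_mul, Matrix.mul_neg, neg_zero, zero_add, add_zero,
    Matrix.fromBlocks_neg, Matrix.fromBlocks_add] at h3
  rw [show (0 : Matrix (Fin d ⊕ Fin d) (Fin d ⊕ Fin d) ℝ) = Matrix.fromBlocks 0 0 0 0 by
    simp] at h3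
  rw [Matrix.fromBlocks_inj] at h3
  obtain ⟨t1, t2, t3, t4⟩ := h3
  simp only [Jmat, Matrix.fromBlocks_transpose, Matrix.fromBlocks_multiply,
    Matrix.mul_zero, Matrix.zero_mul, Matrix.mul_one, Matrix.neg_mul, Matrix.mul_neg,
    neg_zero, zero_add, add_zero, Matrix.fromBlocks_neg, Matrix.fromBlocks_add]
  rw [show (0 : Matrix (Fin d ⊕ Fin d) (Fin d ⊕ Fin d) ℝ) = Matrix.fromBlocks 0 0 0 0 by
    simp]
  rw [Matrix.fromBlocks_inj]
  refine ⟨?_, ?_, ?_, ?_⟩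
  · rw [← t1]; abel
  · rw [← t2]; abel
  · rw [← t3]; abel
  · rw [← t4]; abel

end Helpers

/-- for shift-invertible 𝒜, with G_𝒜 = L E_𝒜⁻¹ ℰ_𝒜,
Ḡ_𝒜 its "bar", and δ_𝒜 = J Ḡ_𝒜, one has δ_𝒜⁻¹ E_𝒜⁻¹ = −Q ℰ_𝒜⁻¹,
equivalently δ_𝒜 = −E_𝒜⁻¹ ℰ_𝒜 Q. -/
theorem stmt11 {d : ℕ}
    (A11 A12 A13 A14 A21 A22 A23 A24 A31 A32 A33 A34 A41 A42 A43 A44 :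
      Matrix (Fin d) (Fin d) ℝ)
    (h : IsSymplectic
      (quad A11 A12 A13 A14 A21 A22 A23 A24 A31 A32 A33 A34 A41 A42 A43 A44))
    (hE : IsUnit (Matrix.fromBlocks A11 A13 A21 A23).det) :
    (Jmat (Fin d) *
        Matrix.fromBlocks
          ((Lmat * (Matrix.fromBlocks A11 A13 A21 A23)⁻¹ *
              Matrix.fromBlocks A12 A14 A22 A24).toBlocks₁₁)
          (-(Lmat * (Matrix.fromBlocks A11 A13 A21 A23)⁻¹ *
              Matrix.fromBlocks A12 A14 A22 A24).toBlocks₁₂)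
          (-(Lmat * (Matrix.fromBlocks A11 A13 A21 A23)⁻¹ *
              Matrix.fromBlocks A12 A14 A22 A24).toBlocks₂₁)
          ((Lmat * (Matrix.fromBlocks A11 A13 A21 A23)⁻¹ *
              Matrix.fromBlocks A12 A14 A22 A24).toBlocks₂₂))⁻¹ *
      (Matrix.fromBlocks A11 A13 A21 A23)⁻¹ =
      -(Qmat * (Matrix.fromBlocks A12 A14 A22 A24)⁻¹) ∧
    Jmat (Fin d) *
        Matrix.fromBlocks
          ((Lmat * (Matrix.fromBlocks A11 A13 A21 A23)⁻¹ *
              Matrix.fromBlocks A12 A14 A22 A24).toBlocks₁₁)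
          (-(Lmat * (Matrix.fromBlocks A11 A13 A21 A23)⁻¹ *
              Matrix.fromBlocks A12 A14 A22 A24).toBlocks₁₂)
          (-(Lmat * (Matrix.fromBlocks A11 A13 A21 A23)⁻¹ *
              Matrix.fromBlocks A12 A14 A22 A24).toBlocks₂₁)
          ((Lmat * (Matrix.fromBlocks A11 A13 A21 A23)⁻¹ *
              Matrix.fromBlocks A12 A14 A22 A24).toBlocks₂₂) =
      -((Matrix.fromBlocks A11 A13 A21 A23)⁻¹ *
          Matrix.fromBlocks A12 A14 A22 A24 * Qmat) := by
  set E : Matrix (Fin d ⊕ Fin d) (Fin d ⊕ Fin d) ℝ := Matrix.fromBlocks A11 A13 A21 A23 with hEdef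
  set F : Matrix (Fin d ⊕ Fin d) (Fin d ⊕ Fin d) ℝ := Matrix.fromBlocks A12 A14 A22 A24 with hFdef
  have hJu : IsUnit (Jmat (Fin d)).det := by
    have hJJ : Jmat (Fin d) * -(Jmat (Fin d)) = 1 := by rw [mul_neg, Jmat_mul_Jmat, neg_neg]
    exact Matrix.isUnit_det_of_right_inverse hJJ
  have heq : F * Jmat (Fin d) * Fᵀ = -(E * Jmat (Fin d) * Eᵀ) :=
    eq_neg_of_add_eq_zero_right (EJE h)
  have hFu : IsUnit F.det := by
    have hu : IsUnit ((F * Jmat (Fin d) * Fᵀ).det) := by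
      rw [heq, Matrix.det_neg, Matrix.det_mul, Matrix.det_mul, Matrix.det_transpose]
      exact (isUnit_one.neg.pow _).mul ((hE.mul hJu).mul hE)
    rw [Matrix.det_mul, Matrix.det_mul, Matrix.det_transpose] at hu
    exact isUnit_of_mul_isUnit_left (isUnit_of_mul_isUnit_left hu)
  have key2 : Jmat (Fin d) *
      Matrix.fromBlocks ((Lmat * E⁻¹ * F).toBlocks₁₁) (-(Lmat * E⁻¹ * F).toBlocks₁₂)
        (-(Lmat * E⁻¹ * F).toBlocks₂₁) ((Lmat * E⁻¹ * F).toBlocks₂₂)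
      = -(E⁻¹ * F * Qmat) := by
    rw [delta_form (Lmat * E⁻¹ * F),
      show Lmat * (Lmat * E⁻¹ * F) = E⁻¹ * F by
        rw [← mul_assoc, ← mul_assoc, Lmat_mul_Lmat, one_mul]]
  refine ⟨?_, key2⟩
  rw [key2]
  have hinv : (-(E⁻¹ * F * Qmat))⁻¹ = -(Qmat * F⁻¹ * E) := by
    apply Matrix.inv_eq_right_inv
    rw [neg_mul_neg]
    simp only [mul_assoc]
    rw [← mul_assoc Qmat Qmat, Qmat_mul_Qmat, one_mul, ← mul_assoc F F⁻¹,
      Matrix.mul_nonsing_inv F hFu, one_mul, Matrix.nonsing_inv_mul E hE]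
  rw [hinv, neg_mul, mul_assoc, Matrix.mul_nonsing_inv E hE, mul_one]
end

section
/- Let A₁₁, A₂₁, A₁₃ ∈ ℝ^{d×d} with A₁₃ = A₁₃ᵀ and A₂₁ = A₂₁ᵀ. Then the 4d×4d matrix with d×d blocks 𝒜 = [[A₁₁, I − A₁₁, A₁₃, A₁₃], [A₂₁, −A₂₁, I − A₁₁ᵀ, −A₁₁ᵀ], [0, 0, I, I], [−I, I, 0, 0]] belongs to Sp(2d,ℝ). Conversely, if a matrix of this block form belongs to Sp(2d,ℝ), then A₁₃ and A₂₁ are symmetric. -/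
open Matrix

private lemma fb_eq_zero {d : ℕ} {A B C D : Matrix (Fin d) (Fin d) ℝ} :
    Matrix.fromBlocks A B C D = (0 : Matrix (Fin d ⊕ Fin d) (Fin d ⊕ Fin d) ℝ) ↔
      A = 0 ∧ B = 0 ∧ C = 0 ∧ D = 0 := by
  rw [← Matrix.fromBlocks_zero, Matrix.fromBlocks_inj]

private lemma fb_eq_one {d : ℕ} {A B C D : Matrix (Fin d) (Fin d) ℝ} :
    Matrix.fromBlocks A B C D = (1 : Matrix (Fin d ⊕ Fin d) (Fin d ⊕ Fin d) ℝ) ↔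
      A = 1 ∧ B = 0 ∧ C = 0 ∧ D = 1 := by
  rw [← Matrix.fromBlocks_one, Matrix.fromBlocks_inj]

private lemma fb_eq_neg_one {d : ℕ} {A B C D : Matrix (Fin d) (Fin d) ℝ} :
    Matrix.fromBlocks A B C D = -(1 : Matrix (Fin d ⊕ Fin d) (Fin d ⊕ Fin d) ℝ) ↔
      A = -1 ∧ B = 0 ∧ C = 0 ∧ D = -1 := by
  rw [← Matrix.fromBlocks_one, Matrix.fromBlocks_neg, Matrix.fromBlocks_inj, neg_zero]

/-- the covariant-form block matrix is symplectic iff A₁₃ and A₂₁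
are symmetric. -/
theorem stmt12 {d : ℕ} (A11 A21 A13 : Matrix (Fin d) (Fin d) ℝ) :
    IsSymplectic
      (quad A11 (1 - A11) A13 A13
        A21 (-A21) (1 - A11ᵀ) (-A11ᵀ)
        0 0 1 1
        (-1) 1 0 0) ↔ (A13ᵀ = A13 ∧ A21ᵀ = A21) := by
  simp only [IsSymplectic, quad, Jmat, Matrix.fromBlocks_transpose, Matrix.fromBlocks_multiply,
    Matrix.transpose_zero, Matrix.transpose_one, Matrix.transpose_neg, Matrix.transpose_sub,
    Matrix.transpose_transpose, Matrix.mul_zero, Matrix.zero_mul, Matrix.mul_one, Matrix.one_mul,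
    Matrix.mul_neg, Matrix.neg_mul, neg_neg, Matrix.fromBlocks_add, Matrix.fromBlocks_neg,
    sub_eq_add_neg, add_zero, zero_add, neg_zero, Matrix.transpose_add,
    Matrix.fromBlocks_inj, fb_eq_zero, fb_eq_one, fb_eq_neg_one]
  constructor
  · rintro ⟨⟨h1, -⟩, -, -, ⟨h2, -⟩⟩
    exact ⟨(neg_add_eq_zero.mp h2).symm, (add_neg_eq_zero.mp h1).symm⟩
  · rintro ⟨h13, h21⟩
    refine ⟨⟨?_, ?_, ?_, ?_⟩, ⟨?_, ?_, ?_, ?_⟩, ⟨?_, ?_, ?_, ?_⟩, ⟨?_, ?_, ?_, ?_⟩⟩ <;>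
      simp [h13, h21, Matrix.transpose_add, Matrix.transpose_neg] <;> abel
end

section
/- Let 0 < τ < 1, d ≥ 1, and let f, g be Schwartz functions on ℝ^d. Then for all x, ξ ∈ ℝ^d, W_τ(f,g)(x,ξ) = τ^{−d/2}(1−τ)^{−d/2} e^{2πi x·ξ/τ} · V_{𝔗_τ g} f(x/(1−τ), ξ/τ), where 𝔗_τ g(t) = (1−τ)^{d/2} τ^{−d/2} g(−((1−τ)/τ) t). Equivalently, W_τ(f,g)(x,ξ) = ⟨f, τ^{−d/2}(1−τ)^{−d/2} e^{−2πi x·ξ/τ} π(x/(1−τ), ξ/τ) 𝔗_τ g⟩. -/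
open MeasureTheory Complex

/-- Euclidean scalar product on ℝ^d. -/
noncomputable def dotR {d : ℕ} (x y : Fin d → ℝ) : ℝ := ∑ i, x i * y i

/-- Time-frequency shift π(x,ξ)g(t) = e^{2πi ξ·t} g(t−x). -/
noncomputable def tfshift {d : ℕ} (x ξ : Fin d → ℝ) (g : (Fin d → ℝ) → ℂ)
    (t : Fin d → ℝ) : ℂ :=
  Complex.exp (2 * Real.pi * Complex.I * (dotR ξ t)) * g (t - x)

/-- Short-time Fourier transform V_g f(x,ξ) = ⟨f, π(x,ξ)g⟩. -/
noncomputable def stft {d : ℕ} (g f : (Fin d → ℝ) → ℂ) (x ξ : Fin d → ℝ) : ℂ :=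
  ∫ t, f t * (starRingEnd ℂ) (tfshift x ξ g t)

/-- τ-Wigner distribution. -/
noncomputable def wignerTau {d : ℕ} (τ : ℝ) (f g : (Fin d → ℝ) → ℂ)
    (x ξ : Fin d → ℝ) : ℂ :=
  ∫ t, f (x + τ • t) * (starRingEnd ℂ) (g (x - (1 - τ) • t)) *
    Complex.exp (-(2 * Real.pi * Complex.I * (dotR ξ t)))

/-- The dilation 𝔗_τ g(t) = (1−τ)^{d/2} τ^{−d/2} g(−((1−τ)/τ) t). -/
noncomputable def dil {d : ℕ} (τ : ℝ) (g : (Fin d → ℝ) → ℂ) (t : Fin d → ℝ) : ℂ :=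
  ((((1 - τ) ^ ((d : ℝ) / 2) * τ ^ (-(d : ℝ) / 2) : ℝ)) : ℂ) * g ((-(1 - τ) / τ) • t)

private lemma conj_exp_pos (r : ℝ) : (starRingEnd ℂ) (Complex.exp (2 * Real.pi * Complex.I * r)) =
    Complex.exp (-(2 * Real.pi * Complex.I * r)) := by
  rw [← Complex.exp_conj]
  congr 1
  simp only [map_mul, Complex.conj_ofReal, Complex.conj_I, map_ofNat]
  ring

private lemma conj_exp_neg (r : ℝ) : (starRingEnd ℂ) (Complex.exp (-(2 * Real.pi * Complex.I * r))) =
    Complex.exp (2 * Real.pi * Complex.I * r) := by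
  rw [← Complex.exp_conj]
  congr 1
  simp only [map_neg, map_mul, Complex.conj_ofReal, Complex.conj_I, map_ofNat]
  ring

private lemma conj_exp_neg' (a b : ℝ) :
    (starRingEnd ℂ) (Complex.exp (-(2 * Real.pi * Complex.I * ((a:ℂ) / (b:ℂ))))) =
    Complex.exp (2 * Real.pi * Complex.I * ((a:ℂ) / (b:ℂ))) := by
  rw [← Complex.exp_conj]
  congr 1
  simp only [map_neg, map_mul, map_div₀, Complex.conj_ofReal, Complex.conj_I, map_ofNat]
  ring

private lemma vec_eq {d : ℕ} (τ : ℝ) (hτ0 : 0 < τ) (hτ1 : τ < 1) (x t : Fin d → ℝ) :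
    (-(1 - τ) / τ) • ((x + τ • t) - (1 - τ)⁻¹ • x) = x - (1 - τ) • t := by
  have h1 : τ ≠ 0 := hτ0.ne'
  have h2 : (1 : ℝ) - τ ≠ 0 := by linarith
  funext i
  simp only [Pi.smul_apply, Pi.add_apply, Pi.sub_apply, smul_eq_mul]
  field_simp
  ring

private lemma dot_eq {d : ℕ} (τ : ℝ) (hτ0 : 0 < τ) (x ξ t : Fin d → ℝ) :
    dotR (τ⁻¹ • ξ) (x + τ • t) = dotR x ξ / τ + dotR ξ t := by
  have h1 : τ ≠ 0 := hτ0.ne'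
  simp only [dotR, Pi.smul_apply, Pi.add_apply, smul_eq_mul, Finset.sum_div,
    ← Finset.sum_add_distrib]
  refine Finset.sum_congr rfl fun i _ => ?_
  field_simp

private lemma scal_eq {d : ℕ} (τ : ℝ) (hτ0 : 0 < τ) (hτ1 : τ < 1) :
    ((τ ^ (-(d:ℝ)/2) * (1-τ) ^ (-(d:ℝ)/2) : ℝ)) * ((1-τ) ^ ((d:ℝ)/2) * τ ^ (-(d:ℝ)/2) : ℝ)
      = ((τ:ℝ)^(d:ℕ))⁻¹ := by
  have h2 : (0:ℝ) < 1 - τ := by linarith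
  have h : τ ^ (-(d:ℝ)/2) * (1-τ) ^ (-(d:ℝ)/2) * ((1-τ) ^ ((d:ℝ)/2) * τ ^ (-(d:ℝ)/2))
      = (τ ^ (-(d:ℝ)/2) * τ ^ (-(d:ℝ)/2)) * ((1-τ) ^ (-(d:ℝ)/2) * (1-τ) ^ ((d:ℝ)/2)) := by
    ring
  rw [h, ← Real.rpow_add hτ0, ← Real.rpow_add h2,
    show (-(d:ℝ)/2 + (d:ℝ)/2) = 0 by ring, Real.rpow_zero, mul_one,
    show (-(d:ℝ)/2 + -(d:ℝ)/2) = -(d:ℝ) by ring,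
    Real.rpow_neg hτ0.le, Real.rpow_natCast]

private lemma pointwise {d : ℕ} (τ : ℝ) (hτ0 : 0 < τ) (hτ1 : τ < 1)
    (f g : ((Fin d) → ℝ) → ℂ) (x ξ t : Fin d → ℝ) :
    f (x + τ • t) * (starRingEnd ℂ) (g (x - (1 - τ) • t)) *
      Complex.exp (-(2 * Real.pi * Complex.I * (dotR ξ t))) =
    ((τ:ℝ)^d) • (f (x + τ • t) * (starRingEnd ℂ)
      ((((τ ^ (-(d : ℝ) / 2) * (1 - τ) ^ (-(d : ℝ) / 2) : ℝ)) : ℂ) *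
        Complex.exp (-(2 * Real.pi * Complex.I * (dotR x ξ / τ))) *
        tfshift ((1 - τ)⁻¹ • x) (τ⁻¹ • ξ) (dil τ g) (x + τ • t))) := by
  rw [tfshift, dil, vec_eq τ hτ0 hτ1 x t, dot_eq τ hτ0 x ξ t]
  simp only [map_mul, Complex.conj_ofReal, conj_exp_pos, conj_exp_neg, conj_exp_neg',
    Complex.real_smul]
  have hE : Complex.exp (2 * (Real.pi:ℂ) * Complex.I * ((dotR x ξ : ℂ) / (τ:ℂ))) *
      Complex.exp (-(2 * (Real.pi:ℂ) * Complex.I * ((dotR x ξ / τ + dotR ξ t : ℝ) : ℂ))) =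
      Complex.exp (-(2 * (Real.pi:ℂ) * Complex.I * ((dotR ξ t : ℝ) : ℂ))) := by
    rw [← Complex.exp_add]
    congr 1
    push_cast
    ring
  have hs : (((τ:ℝ)^d : ℝ) : ℂ) * ((τ ^ (-(d:ℝ)/2) * (1-τ) ^ (-(d:ℝ)/2) : ℝ) : ℂ) *
      (((1-τ) ^ ((d:ℝ)/2) * τ ^ (-(d:ℝ)/2) : ℝ) : ℂ) = 1 := by
    have hsR : ((τ:ℝ)^d : ℝ) * (τ ^ (-(d:ℝ)/2) * (1-τ) ^ (-(d:ℝ)/2)) *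
        ((1-τ) ^ ((d:ℝ)/2) * τ ^ (-(d:ℝ)/2)) = 1 := by
      rw [mul_assoc, scal_eq τ hτ0 hτ1, mul_inv_cancel₀ (by positivity)]
    exact_mod_cast hsR
  linear_combination (-(Complex.exp (-(2 * (Real.pi:ℂ) * Complex.I * ((dotR ξ t : ℝ) : ℂ))) *
      f (x + τ • t) * (starRingEnd ℂ) (g (x - (1 - τ) • t)))) * hs +
    (-((((τ:ℝ)^d : ℝ) : ℂ) * ((τ ^ (-(d:ℝ)/2) * (1-τ) ^ (-(d:ℝ)/2) : ℝ) : ℂ) *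
      (((1-τ) ^ ((d:ℝ)/2) * τ ^ (-(d:ℝ)/2) : ℝ) : ℂ) * f (x + τ • t) *
      (starRingEnd ℂ) (g (x - (1 - τ) • t)))) * hE

lemma cov {d : ℕ} (τ : ℝ) (hτ0 : 0 < τ) (x : Fin d → ℝ) (h : ((Fin d) → ℝ) → ℂ) :
    ∫ t, h t = ((τ:ℝ)^d) • ∫ t, h (x + τ • t) := by
  have h1 := MeasureTheory.Measure.integral_comp_smul volume (fun u => h (x + u)) τ
  simp only [Module.finrank_fin_fun] at h1
  have h2 : ∫ u, h (x + u) = ∫ t, h t := integral_add_left_eq_self h x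
  rw [h2] at h1
  rw [show (∫ t, h (x + τ • t)) = ∫ t, (fun u => h (x + u)) (τ • t) from rfl, h1,
    abs_of_pos (by positivity), smul_smul, mul_inv_cancel₀ (by positivity), one_smul]

private lemma pull {d : ℕ} (F T : ((Fin d) → ℝ) → ℂ) (c : ℂ) :
    (∫ t, F t * (starRingEnd ℂ) (c * T t)) =
      (starRingEnd ℂ) c * ∫ t, F t * (starRingEnd ℂ) (T t) := by
  rw [← MeasureTheory.integral_const_mul]
  congr 1
  funext t
  rw [map_mul]
  ring

/-- the τ-Wigner distribution is a rescaled STFT up to chirps: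
W_τ(f,g)(x,ξ) = τ^{−d/2}(1−τ)^{−d/2} e^{2πi x·ξ/τ} V_{𝔗_τ g}f(x/(1−τ), ξ/τ),
equivalently W_τ(f,g)(x,ξ) = ⟨f, τ^{−d/2}(1−τ)^{−d/2} e^{−2πi x·ξ/τ}
π(x/(1−τ), ξ/τ)𝔗_τ g⟩. -/
theorem stmt14 {d : ℕ} (hd : 1 ≤ d) (τ : ℝ) (hτ0 : 0 < τ) (hτ1 : τ < 1)
    (f g : SchwartzMap ((Fin d) → ℝ) ℂ) :
    ∀ x ξ : Fin d → ℝ,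
      wignerTau τ (⇑f) (⇑g) x ξ =
        (((τ ^ (-(d : ℝ) / 2) * (1 - τ) ^ (-(d : ℝ) / 2) : ℝ)) : ℂ) *
          Complex.exp (2 * Real.pi * Complex.I * (dotR x ξ / τ)) *
          stft (dil τ (⇑g)) (⇑f) ((1 - τ)⁻¹ • x) (τ⁻¹ • ξ) ∧
      wignerTau τ (⇑f) (⇑g) x ξ =
        ∫ t, f t * (starRingEnd ℂ)
          ((((τ ^ (-(d : ℝ) / 2) * (1 - τ) ^ (-(d : ℝ) / 2) : ℝ)) : ℂ) *
            Complex.exp (-(2 * Real.pi * Complex.I * (dotR x ξ / τ))) *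
            tfshift ((1 - τ)⁻¹ • x) (τ⁻¹ • ξ) (dil τ (⇑g)) t) := by
  intro x ξ
  have h2 : wignerTau τ (⇑f) (⇑g) x ξ =
      ∫ t, f t * (starRingEnd ℂ)
        ((((τ ^ (-(d : ℝ) / 2) * (1 - τ) ^ (-(d : ℝ) / 2) : ℝ)) : ℂ) *
          Complex.exp (-(2 * Real.pi * Complex.I * (dotR x ξ / τ))) *
          tfshift ((1 - τ)⁻¹ • x) (τ⁻¹ • ξ) (dil τ (⇑g)) t) := by
    rw [wignerTau, cov τ hτ0 x (fun t => f t * (starRingEnd ℂ)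
        ((((τ ^ (-(d : ℝ) / 2) * (1 - τ) ^ (-(d : ℝ) / 2) : ℝ)) : ℂ) *
          Complex.exp (-(2 * Real.pi * Complex.I * (dotR x ξ / τ))) *
          tfshift ((1 - τ)⁻¹ • x) (τ⁻¹ • ξ) (dil τ (⇑g)) t)), ← integral_smul]
    congr 1
    funext t
    exact pointwise τ hτ0 hτ1 (⇑f) (⇑g) x ξ t
  refine ⟨?_, h2⟩
  rw [h2, pull, stft]
  congr 1
  simp only [map_mul, Complex.conj_ofReal, conj_exp_neg']
end

section
/- For every τ ∈ ℝ, the 4d×4d matrix A_τ with d×d blocks [[(1−τ)I, τI, 0, 0], [0, 0, τI, −(1−τ)I], [0, 0, I, I], [−I, I, 0, 0]] belongs to Sp(2d,ℝ). Likewise, the 4d×4d matrix A_{ST} with d×d blocks [[I, −I, 0, 0], [0, 0, I, I], [0, 0, 0, −I], [−I, 0, 0, 0]] belongs to Sp(2d,ℝ). -/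
open Matrix

lemma Jquad {d : ℕ} : Jmat (Fin d ⊕ Fin d) = quad 0 0 1 0 0 0 0 1 (-1) 0 0 0 0 (-1) 0 0 := by
  unfold Jmat quad
  congr 1 <;>
    simp [← Matrix.fromBlocks_zero, Matrix.fromBlocks_one,
      show (Matrix.fromBlocks (-1) 0 0 (-1) : Matrix (Fin d ⊕ Fin d) (Fin d ⊕ Fin d) ℝ)
        = -(Matrix.fromBlocks 1 0 0 1) by rw [Matrix.fromBlocks_neg]; norm_num]

/-- the matrices A_τ (for every τ ∈ ℝ) and A_{ST} belong to Sp(2d,ℝ). -/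
theorem stmt19 {d : ℕ} :
    (∀ τ : ℝ,
      IsSymplectic
        (quad ((1 - τ) • (1 : Matrix (Fin d) (Fin d) ℝ)) (τ • 1) 0 0
          0 0 (τ • 1) (-(1 - τ) • 1)
          0 0 1 1
          (-1) 1 0 0)) ∧
    IsSymplectic
      (quad (1 : Matrix (Fin d) (Fin d) ℝ) (-1) 0 0
        0 0 1 1
        0 0 0 (-1)
        (-1) 0 0 0) := by
  constructor
  · intro τ
    unfold IsSymplectic
    rw [Jquad]
    unfold quad
    simp only [Matrix.fromBlocks_transpose, Matrix.transpose_smul, Matrix.transpose_one,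
      Matrix.transpose_zero, Matrix.transpose_neg]
    rw [Matrix.fromBlocks_multiply, Matrix.fromBlocks_multiply]
    simp only [Matrix.fromBlocks_multiply, Matrix.fromBlocks_add, Matrix.mul_smul,
      Matrix.smul_mul, Matrix.mul_one, Matrix.one_mul, Matrix.mul_zero, Matrix.zero_mul,
      mul_one, one_mul, smul_smul, add_zero, zero_add, smul_zero, mul_neg, neg_mul, neg_zero,
      neg_neg, Matrix.mul_neg, Matrix.neg_mul, smul_neg, neg_smul, neg_add_cancel, ← neg_add,
      show (1-τ) • (1 : Matrix (Fin d) (Fin d) ℝ) + τ • 1 = 1 by module,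
      show τ • (1 : Matrix (Fin d) (Fin d) ℝ) + (1-τ) • 1 = 1 by module]
  · unfold IsSymplectic
    rw [Jquad]
    unfold quad
    simp only [Matrix.fromBlocks_transpose, Matrix.transpose_one, Matrix.transpose_zero,
      Matrix.transpose_neg]
    rw [Matrix.fromBlocks_multiply, Matrix.fromBlocks_multiply]
    simp only [Matrix.fromBlocks_multiply, Matrix.fromBlocks_add, Matrix.mul_one,
      Matrix.one_mul, Matrix.mul_zero, Matrix.zero_mul, add_zero, zero_add, neg_zero,
      neg_neg, Matrix.mul_neg, Matrix.neg_mul, add_neg_cancel]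
end
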